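/- arXiv:2404.10756 — 6 statements merged into one kernel-verified Lean document; each statement's English description precedes it below -/
import Mathlib

section
/- A divergence-free velocity field transports domains without changing their volume: if div β(t,x) = 0 for all (t,x), Φ(t,·) is injective for every t, and Ω₀ ⊆ ℝ^d is a bounded measurable set, then the Lebesgue measure of Ω(t) = Φ(t,·)''Ω₀ equals the Lebesgue measure of Ω₀ for every t ∈ ℝ. -/
open MeasureTheory

noncomputable section

/-- Euclidean space `ℝ^d`. -/
abbrev Euc (d : ℕ) : Type := EuclideanSpace ℝ (Fin d)

/-- Divergence of a vector field: the trace of its Fréchet derivative. -/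
noncomputable def vdiv {d : ℕ} (w : Euc d → Euc d) (x : Euc d) : ℝ :=
  LinearMap.trace ℝ (Euc d) (fderiv ℝ w x).toLinearMap

/-- det as a continuous multilinear map in the rows. -/
noncomputable def detCML (d : ℕ) : ContinuousMultilinearMap ℝ (fun _ : Fin d => (Fin d → ℝ)) ℝ where
  toMultilinearMap :=
    (Matrix.detRowAlternating : (Fin d → ℝ) [⋀^Fin d]→ₗ[ℝ] ℝ).toMultilinearMap
  cont := by
    exact (continuous_id : Continuous fun A : Matrix (Fin d) (Fin d) ℝ => A).matrix_det

lemma detCML_apply {d : ℕ} (A : Matrix (Fin d) (Fin d) ℝ) :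
    detCML d A = A.det := rfl

lemma detCML_linearDeriv_mul {d : ℕ} (A B : Matrix (Fin d) (Fin d) ℝ) :
    (detCML d).linearDeriv A (B * A) = B.trace * A.det := by
  classical
  refine (ContinuousMultilinearMap.linearDeriv_apply (detCML d) (A : Fin d → Fin d → ℝ)
    ((B * A : Matrix (Fin d) (Fin d) ℝ) : Fin d → Fin d → ℝ)).trans ?_
  have h2 : ∀ i : Fin d, (B * A) i = ∑ k, B i k • A k := by
    intro i
    funext j
    rw [Matrix.mul_apply]
    simp [Finset.sum_apply]
  have h1 : ∀ i : Fin d, (Function.update (A : Fin d → Fin d → ℝ) i ((B * A) i))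
      = Matrix.updateRow A i (∑ k, B i k • A k) := by
    intro i
    rw [h2 i]
    rfl
  calc (∑ i, detCML d (Function.update (A : Fin d → Fin d → ℝ) i ((B * A) i)))
      = ∑ i, (Matrix.updateRow A i (∑ k, B i k • A k)).det := by
        refine Finset.sum_congr rfl fun i _ => ?_
        rw [h1 i]; rfl
    _ = ∑ i, B i i • A.det := by
        refine Finset.sum_congr rfl fun i _ => ?_
        exact Matrix.det_updateRow_sum A i (B i ·)
    _ = B.trace * A.det := by
        simp [Matrix.trace, Matrix.diag, Finset.sum_mul]

/-- A divergence-free velocity field transports domains without changing their volume: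
the Lebesgue measure of `Ω(t) = Φ(t,·)'' Ω₀` equals that of `Ω₀` for every `t`. -/
theorem volume_image_flow_eq_of_divergenceFree
    (d : ℕ) (hd : 1 ≤ d)
    (β : ℝ → Euc d → Euc d)
    (hβ : ContDiff ℝ 1 (fun p : ℝ × Euc d => β p.1 p.2))
    (Φ : ℝ → Euc d → Euc d)
    (hΦ0 : ∀ x, Φ 0 x = x)
    (hΦt : ∀ t x, HasDerivAt (fun s => Φ s x) (β t (Φ t x)) t)
    (DΦ : ℝ → Euc d → Euc d →L[ℝ] Euc d)
    (hDΦ : ∀ t x, HasFDerivAt (Φ t) (DΦ t x) x)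
    (hDΦcont : Continuous fun p : ℝ × Euc d => DΦ p.1 p.2)
    (hDΦt : ∀ t x, HasDerivAt (fun s => DΦ s x)
        ((fderiv ℝ (β t) (Φ t x)).comp (DΦ t x)) t)
    (hdivfree : ∀ (t : ℝ) (x : Euc d), vdiv (β t) x = 0)
    (hΦinj : ∀ t : ℝ, Function.Injective (Φ t))
    (Ω₀ : Set (Euc d)) (hΩ₀bdd : Bornology.IsBounded Ω₀) (hΩ₀meas : MeasurableSet Ω₀) :
    ∀ t : ℝ, volume (Φ t '' Ω₀) = volume Ω₀ := by
  classical
  let b : Module.Basis (Fin d) ℝ (Euc d) := (EuclideanSpace.basisFun (Fin d) ℝ).toBasis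
  -- the linear "take the matrix" map, into the pi-type (which is defeq to matrices)
  let M : (Euc d →L[ℝ] Euc d) →ₗ[ℝ] (Fin d → Fin d → ℝ) :=
    (LinearMap.toMatrix b b).toLinearMap.comp (ContinuousLinearMap.coeLM ℝ)
  let Mc : (Euc d →L[ℝ] Euc d) →L[ℝ] (Fin d → Fin d → ℝ) := LinearMap.toContinuousLinearMap M
  -- the determinant of DΦ is constant equal to 1
  have hdet1 : ∀ t x, Matrix.det (M (DΦ t x) : Matrix (Fin d) (Fin d) ℝ) = 1 := by
    intro t x
    have hderiv : ∀ s : ℝ,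
        HasDerivAt (fun u => Matrix.det (M (DΦ u x) : Matrix (Fin d) (Fin d) ℝ)) 0 s := by
      intro s
      have h1 : HasDerivAt (fun u => M (DΦ u x))
          (M ((fderiv ℝ (β s) (Φ s x)).comp (DΦ s x))) s :=
        Mc.hasFDerivAt.comp_hasDerivAt s (hDΦt s x)
      have h2 : HasDerivAt (fun u => detCML d (M (DΦ u x)))
          ((detCML d).linearDeriv (M (DΦ s x)) (M ((fderiv ℝ (β s) (Φ s x)).comp (DΦ s x)))) s :=
        (ContinuousMultilinearMap.hasFDerivAt (detCML d) (M (DΦ s x))).comp_hasDerivAt s h1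
      have h3 : (M ((fderiv ℝ (β s) (Φ s x)).comp (DΦ s x)) : Matrix (Fin d) (Fin d) ℝ)
          = (LinearMap.toMatrix b b (fderiv ℝ (β s) (Φ s x)).toLinearMap)
            * (show Matrix (Fin d) (Fin d) ℝ from M (DΦ s x)) := by
        show LinearMap.toMatrix b b ((fderiv ℝ (β s) (Φ s x)).comp (DΦ s x) :
            Euc d →ₗ[ℝ] Euc d) = _
        exact LinearMap.toMatrix_comp b b b (fderiv ℝ (β s) (Φ s x)).toLinearMap
          (DΦ s x).toLinearMap
      have htr : Matrix.trace (LinearMap.toMatrix b b (fderiv ℝ (β s) (Φ s x)).toLinearMap)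
          = 0 := by
        rw [← LinearMap.trace_eq_matrix_trace ℝ b]
        exact hdivfree s (Φ s x)
      have e := detCML_linearDeriv_mul (M (DΦ s x))
        (LinearMap.toMatrix b b (fderiv ℝ (β s) (Φ s x)).toLinearMap)
      rw [htr, zero_mul] at e
      rw [h3] at h2
      exact h2.congr_deriv e
    have hconst : Matrix.det (M (DΦ t x) : Matrix (Fin d) (Fin d) ℝ)
        = Matrix.det (M (DΦ 0 x) : Matrix (Fin d) (Fin d) ℝ) :=
      is_const_of_deriv_eq_zero (fun u => (hderiv u).differentiableAt)
        (fun u => (hderiv u).deriv) t 0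
    have hD0 : DΦ 0 x = ContinuousLinearMap.id ℝ (Euc d) := by
      have hid : Φ 0 = fun y : Euc d => y := funext hΦ0
      have h0 : HasFDerivAt (fun y : Euc d => y) (ContinuousLinearMap.id ℝ (Euc d)) x :=
        hasFDerivAt_id x
      have h0' := hDΦ 0 x
      rw [hid] at h0'
      exact h0'.unique h0
    rw [hconst, hD0]
    show Matrix.det (LinearMap.toMatrix b b
      ((ContinuousLinearMap.id ℝ (Euc d) : Euc d →L[ℝ] Euc d) : Euc d →ₗ[ℝ] Euc d)) = 1
    rw [ContinuousLinearMap.coe_id, LinearMap.toMatrix_id, Matrix.det_one]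
  intro t
  have hdet : ∀ x, (DΦ t x).det = 1 := by
    intro x
    have h : Matrix.det (M (DΦ t x) : Matrix (Fin d) (Fin d) ℝ)
        = LinearMap.det ((DΦ t x : Euc d →L[ℝ] Euc d) : Euc d →ₗ[ℝ] Euc d) :=
      LinearMap.det_toMatrix b _
    rw [ContinuousLinearMap.det, ← h, hdet1]
  rw [← MeasureTheory.lintegral_abs_det_fderiv_eq_addHaar_image volume hΩ₀meas
      (fun x _ => (hDΦ t x).hasFDerivWithinAt) (hΦinj t).injOn]
  simp [hdet]
end
end

section
/- Reynolds' transport theorem (volume form) for a domain transported by a flow: for every t ∈ ℝ, the function G(t) = ∫_{Ω(t)} u(t,x) dx is differentiable and G'(t) = ∫_{Ω(t)} ( ∂ₜu(t,x) + div( β(t,·) u(t,·) )(x) ) dx, where div(β(t,·)u(t,·)) is the spatial divergence of the vector field x ↦ u(t,x)β(t,x). -/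
open MeasureTheory

noncomputable section

namespace ReynoldsAux

/-- The determinant as a continuous multilinear map in the rows. -/
def detCML (ι : Type) [Fintype ι] [DecidableEq ι] :
    ContinuousMultilinearMap ℝ (fun _ : ι => (ι → ℝ)) ℝ :=
  MultilinearMap.mkContinuous
    (Matrix.detRowAlternating (n := ι) (R := ℝ)).toMultilinearMap
    (Fintype.card (Equiv.Perm ι)) (by
      intro m
      show ‖Matrix.det (Matrix.of m)‖ ≤ _
      rw [Matrix.det_apply]
      refine (norm_sum_le _ _).trans ?_
      have h : ∀ σ ∈ Finset.univ, ‖Equiv.Perm.sign σ • ∏ i, Matrix.of m (σ i) i‖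
          ≤ ∏ i, ‖m i‖ := by
        intro σ _
        have h1 : ‖Equiv.Perm.sign σ • ∏ i, Matrix.of m (σ i) i‖
            = ‖∏ i, m (σ i) i‖ := by
          rcases Int.units_eq_one_or (Equiv.Perm.sign σ) with h | h <;>
            simp [h, Matrix.of_apply]
        rw [h1, Real.norm_eq_abs, Finset.abs_prod]
        calc ∏ i, |m (σ i) i| ≤ ∏ i, ‖m (σ i)‖ :=
            Finset.prod_le_prod (fun _ _ => abs_nonneg _)
              (fun i _ => norm_le_pi_norm (m (σ i)) i)
          _ = ∏ i, ‖m i‖ := Equiv.prod_comp σ (fun i => ‖m i‖)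
      refine (Finset.sum_le_card_nsmul _ _ _ h).trans ?_
      simp [nsmul_eq_mul, Finset.card_univ])

@[simp] theorem detCML_apply (ι : Type) [Fintype ι] [DecidableEq ι]
    (m : ι → ι → ℝ) : detCML ι m = Matrix.det (Matrix.of m) := rfl

/-- Jacobi's formula / Liouville: derivative of the determinant along a path
`A` with `A' = B * A` is `tr B * det A`. -/
theorem jacobi_det {ι : Type} [Fintype ι] [DecidableEq ι]
    (A : ℝ → Matrix ι ι ℝ) (B : Matrix ι ι ℝ) (t : ℝ)
    (hA : ∀ i j, HasDerivAt (fun s => A s i j) ((B * A t) i j) t) :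
    HasDerivAt (fun s => (A s).det) (B.trace * (A t).det) t := by
  have hrows : HasDerivAt (fun s => (fun i j => A s i j : ι → ι → ℝ))
      (fun i j => (B * A t) i j) t :=
    hasDerivAt_pi.2 fun i => hasDerivAt_pi.2 fun j => hA i j
  have h := ((detCML ι).hasFDerivAt (fun i j => A t i j)).comp_hasDerivAt t hrows
  have hval : (detCML ι).linearDeriv (fun i j => A t i j) (fun i j => (B * A t) i j)
      = B.trace * (A t).det := by
    rw [ContinuousMultilinearMap.linearDeriv_apply]
    have key : ∀ i, detCML ι (Function.update (fun i j => A t i j) i (fun j => (B * A t) i j))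
        = B i i * (A t).det := by
      intro i
      have hrow : (B * A t) i = ∑ k, B i k • (A t) k := by
        funext j
        simp [Matrix.mul_apply, Finset.sum_apply]
      have hupd : (Matrix.of (Function.update (fun i j => A t i j) i (fun j => (B * A t) i j)))
          = (A t).updateRow i (∑ k, B i k • (A t) k) := by
        rw [show (fun j => (B * A t) i j) = (B * A t) i from rfl, hrow]; rfl
      rw [detCML_apply, hupd, Matrix.det_updateRow_sum]
      simp
    simp only [key]
    rw [Matrix.trace, ← Finset.sum_mul]
    rfl
  rw [← hval]
  exact h

/-- Positivity for solutions of the linear ODE `j' = c j`, `j 0 = 1`. -/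
theorem ode_pos (j c : ℝ → ℝ) (hc : Continuous c)
    (hj : ∀ s, HasDerivAt j (c s * j s) s) (h0 : j 0 = 1) : ∀ s, 0 < j s := by
  set I : ℝ → ℝ := fun s => ∫ r in (0:ℝ)..s, c r with hI_def
  have hI : ∀ s, HasDerivAt I (c s) s := by
    intro s
    exact intervalIntegral.integral_hasDerivAt_right (hc.intervalIntegrable _ _)
      (hc.stronglyMeasurable.stronglyMeasurableAtFilter) hc.continuousAt
  have hg : ∀ s, HasDerivAt (fun r => j r * Real.exp (-I r)) 0 s := by
    intro s
    have h1 : HasDerivAt (fun r => Real.exp (-I r)) (Real.exp (-I s) * (-c s)) s :=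
      ((hI s).neg).exp
    have h2 : HasDerivAt (fun r => j r * Real.exp (-I r))
        (c s * j s * Real.exp (-I s) + j s * (Real.exp (-I s) * -c s)) s := (hj s).mul h1
    convert h2 using 1
    ring
  have hconst : ∀ s, j s * Real.exp (-I s) = 1 := by
    intro s
    have h := is_const_of_deriv_eq_zero (f := fun r => j r * Real.exp (-I r))
      (fun x => ((hg x).differentiableAt)) (fun x => (hg x).deriv) s 0
    simpa [hI_def, h0] using h
  intro s
  have h := hconst s
  have he := Real.exp_pos (-I s)
  nlinarith

theorem trace_smulRight {d : ℕ} (c : Euc d →L[ℝ] ℝ) (v : Euc d) :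
    LinearMap.trace ℝ (Euc d) (c.smulRight v).toLinearMap = c v := by
  classical
  set b : Module.Basis (Fin d) ℝ (Euc d) := (EuclideanSpace.basisFun (Fin d) ℝ).toBasis with hb
  rw [LinearMap.trace_eq_matrix_trace ℝ b]
  rw [Matrix.trace]
  have h1 : ∀ i, (LinearMap.toMatrix b b (c.smulRight v).toLinearMap).diag i
      = c (b i) * b.repr v i := by
    intro i
    simp [Matrix.diag, LinearMap.toMatrix_apply, ContinuousLinearMap.smulRight_apply,
      _root_.map_smul, smul_eq_mul]
  rw [Finset.sum_congr rfl (fun i _ => h1 i)]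
  conv_rhs => rw [← b.sum_repr v]
  rw [map_sum]
  exact Finset.sum_congr rfl (fun i _ => by rw [_root_.map_smul, smul_eq_mul, mul_comm])

/-- Trace of `a • L + c.smulRight v`. -/
theorem trace_formula {d : ℕ} (a : ℝ) (L : Euc d →L[ℝ] Euc d) (c : Euc d →L[ℝ] ℝ) (v : Euc d) :
    LinearMap.trace ℝ (Euc d) (a • L + c.smulRight v).toLinearMap
      = a * LinearMap.trace ℝ (Euc d) L.toLinearMap + c v := by
  rw [ContinuousLinearMap.coe_add, map_add, ContinuousLinearMap.coe_smul, _root_.map_smul,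
    smul_eq_mul, trace_smulRight]

end ReynoldsAux

/-- Reynolds' transport theorem (volume form): `G(t) = ∫_{Ω(t)} u(t,x) dx` is differentiable
with `G'(t) = ∫_{Ω(t)} (∂ₜu + div(β(t,·) u(t,·)))(x) dx`, where `Ω(t) = Φ(t,·)'' Ω₀`. -/
theorem reynolds_transport_theorem
    (d : ℕ) (hd : 1 ≤ d)
    (β : ℝ → Euc d → Euc d)
    (hβ : ContDiff ℝ 1 (fun p : ℝ × Euc d => β p.1 p.2))
    (hβbdd : ∃ C : ℝ, ∀ p : ℝ × Euc d,
      ‖fderiv ℝ (fun q : ℝ × Euc d => β q.1 q.2) p‖ ≤ C)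
    (Φ : ℝ → Euc d → Euc d)
    (hΦ0 : ∀ x, Φ 0 x = x)
    (hΦt : ∀ t x, HasDerivAt (fun s => Φ s x) (β t (Φ t x)) t)
    (hΦC1 : ContDiff ℝ 1 (fun p : ℝ × Euc d => Φ p.1 p.2))
    (hΦinj : ∀ t : ℝ, Function.Injective (Φ t))
    (DΦ : ℝ → Euc d → Euc d →L[ℝ] Euc d)
    (hDΦ : ∀ t x, HasFDerivAt (Φ t) (DΦ t x) x)
    (hDΦcont : Continuous fun p : ℝ × Euc d => DΦ p.1 p.2)
    (hDΦt : ∀ t x, HasDerivAt (fun s => DΦ s x)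
        ((fderiv ℝ (β t) (Φ t x)).comp (DΦ t x)) t)
    (Ω₀ : Set (Euc d)) (hΩ₀bdd : Bornology.IsBounded Ω₀) (hΩ₀meas : MeasurableSet Ω₀)
    (u : ℝ → Euc d → ℝ)
    (hu : ContDiff ℝ 1 (fun p : ℝ × Euc d => u p.1 p.2))
    (hubdd : ∃ C : ℝ, ∀ p : ℝ × Euc d,
      |u p.1 p.2| ≤ C ∧ ‖fderiv ℝ (fun q : ℝ × Euc d => u q.1 q.2) p‖ ≤ C) :
    ∀ t : ℝ,
      HasDerivAt (fun s => ∫ x in Φ s '' Ω₀, u s x)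
        (∫ x in Φ t '' Ω₀,
          (deriv (fun s => u s x) t + vdiv (fun y => u t y • β t y) x)) t := by
  classical
  intro t
  set U : ℝ × Euc d → ℝ := fun p => u p.1 p.2 with hU_def
  set W : ℝ × Euc d → Euc d := fun p => β p.1 p.2 with hW_def
  have hUdiff : Differentiable ℝ U := hu.differentiable one_ne_zero
  have hUfc : Continuous fun p => fderiv ℝ U p := (contDiff_one_iff_fderiv.mp hu).2
  have hWdiff : Differentiable ℝ W := hβ.differentiable one_ne_zero
  have hWfc : Continuous fun p => fderiv ℝ W p := (contDiff_one_iff_fderiv.mp hβ).2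
  have hΦcont : Continuous fun p : ℝ × Euc d => Φ p.1 p.2 := hΦC1.continuous
  have hucont : Continuous U := hu.continuous
  -- spatial derivative of β
  set Dβ : ℝ × Euc d → (Euc d →L[ℝ] Euc d) :=
    fun p => (fderiv ℝ W p).comp (ContinuousLinearMap.inr ℝ ℝ (Euc d)) with hDβ_def
  have hDβ : ∀ s y, HasFDerivAt (β s) (Dβ (s, y)) y := by
    intro s y
    exact (hWdiff (s, y)).hasFDerivAt.comp y (hasFDerivAt_prodMk_right s y)
  have hDβcont : Continuous Dβ := hWfc.clm_comp continuous_const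
  -- spatial derivative of u
  have hDu : ∀ s y, HasFDerivAt (u s)
      ((fderiv ℝ U (s, y)).comp (ContinuousLinearMap.inr ℝ ℝ (Euc d))) y := by
    intro s y
    exact (hUdiff (s, y)).hasFDerivAt.comp y (hasFDerivAt_prodMk_right s y)
  -- trace functional
  set τ : (Euc d →L[ℝ] Euc d) → ℝ := fun L => LinearMap.trace ℝ (Euc d) L.toLinearMap
    with hτ_def
  have hτcont : Continuous τ := by
    have h : τ = fun L => LinearMap.toContinuousLinearMap
        ((LinearMap.trace ℝ (Euc d)).comp (ContinuousLinearMap.coeLM ℝ)) L := by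
      funext L; simp [hτ_def]
    rw [h]
    exact (LinearMap.toContinuousLinearMap _).continuous
  set c : ℝ × Euc d → ℝ := fun p => τ (Dβ p) with hc_def
  have hccont : Continuous c := hτcont.comp hDβcont
  -- Jacobian determinant
  set J : ℝ × Euc d → ℝ := fun p => (DΦ p.1 p.2).det with hJ_def
  have hJcont : Continuous J := ContinuousLinearMap.continuous_det.comp hDΦcont
  -- derivative of the Jacobian: Liouville
  have hJderiv : ∀ s x, HasDerivAt (fun r => J (r, x)) (c (s, Φ s x) * J (s, x)) s := by
    intro s x
    set b : Module.Basis (Fin d) ℝ (Euc d) := (EuclideanSpace.basisFun (Fin d) ℝ).toBasis with hb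
    set Ψ : (Euc d →L[ℝ] Euc d) →ₗ[ℝ] Matrix (Fin d) (Fin d) ℝ :=
      (LinearMap.toMatrix b b).toLinearMap ∘ₗ ContinuousLinearMap.coeLM ℝ with hΨ_def
    set A : ℝ → Matrix (Fin d) (Fin d) ℝ := fun r => Ψ (DΦ r x) with hA_def
    set Bm : Matrix (Fin d) (Fin d) ℝ := Ψ (Dβ (s, Φ s x)) with hBm_def
    have hβf : fderiv ℝ (β s) (Φ s x) = Dβ (s, Φ s x) := (hDβ s (Φ s x)).fderiv
    have hent : ∀ i j, HasDerivAt (fun r => A r i j) ((Bm * A s) i j) s := by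
      intro i j
      set E : (Euc d →L[ℝ] Euc d) →ₗ[ℝ] ℝ :=
        (LinearMap.proj j) ∘ₗ (LinearMap.proj i) ∘ₗ Ψ with hE_def
      have h1 := (LinearMap.toContinuousLinearMap E).hasFDerivAt.comp_hasDerivAt s (hDΦt s x)
      have h2 : (LinearMap.toContinuousLinearMap E) ((fderiv ℝ (β s) (Φ s x)).comp (DΦ s x))
          = (Bm * A s) i j := by
        rw [hβf]
        show E ((Dβ (s, Φ s x)).comp (DΦ s x)) = _
        have h3 : Ψ ((Dβ (s, Φ s x)).comp (DΦ s x)) = Bm * A s := by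
          show LinearMap.toMatrix b b (((Dβ (s, Φ s x)).comp (DΦ s x)).toLinearMap) = _
          rw [ContinuousLinearMap.toLinearMap_comp, LinearMap.toMatrix_comp b b b]
          rfl
        show Ψ ((Dβ (s, Φ s x)).comp (DΦ s x)) i j = _
        rw [h3]
      rw [h2] at h1
      exact h1
    have h := ReynoldsAux.jacobi_det A Bm s hent
    have hdet : ∀ r, (A r).det = J (r, x) := by
      intro r
      show (LinearMap.toMatrix b b (DΦ r x).toLinearMap).det = _
      rw [LinearMap.det_toMatrix]
    have htr : Bm.trace = c (s, Φ s x) := by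
      show (LinearMap.toMatrix b b (Dβ (s, Φ s x)).toLinearMap).trace = _
      rw [← LinearMap.trace_eq_matrix_trace ℝ b]
    simp only [hdet, htr] at h
    exact h
  -- positivity of the Jacobian
  have hΦcont1 : ∀ x, Continuous fun s : ℝ => Φ s x := fun x =>
    hΦcont.comp (continuous_id.prodMk continuous_const)
  have hJpos : ∀ s x, 0 < J (s, x) := by
    intro s x
    refine ReynoldsAux.ode_pos (fun r => J (r, x)) (fun r => c (r, Φ r x)) ?_
      (fun r => hJderiv r x) ?_ s
    · exact hccont.comp (continuous_id.prodMk (hΦcont1 x))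
    · have h1 := hDΦ 0 x
      have h2 : HasFDerivAt (Φ 0) (ContinuousLinearMap.id ℝ (Euc d)) x := by
        have h : Φ 0 = fun y => y := funext hΦ0
        rw [h]
        exact hasFDerivAt_id x
      have h3 : DΦ 0 x = ContinuousLinearMap.id ℝ (Euc d) := h1.unique h2
      show (DΦ 0 x).det = 1
      rw [h3]
      simp [ContinuousLinearMap.det]
  -- change of variables
  have hCOV : ∀ (s : ℝ) (g : Euc d → ℝ), ∫ x in Φ s '' Ω₀, g x
      = ∫ x in Ω₀, |J (s, x)| • g (Φ s x) := fun s g =>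
    integral_image_eq_integral_abs_det_fderiv_smul volume hΩ₀meas
      (fun x _ => (hDΦ s x).hasFDerivWithinAt) (hΦinj s).injOn g
  -- the transported integrand and its time derivative
  set F : ℝ → Euc d → ℝ := fun s x => J (s, x) * u s (Φ s x) with hF_def
  set F' : ℝ → Euc d → ℝ := fun s x =>
    c (s, Φ s x) * J (s, x) * u s (Φ s x)
      + J (s, x) * fderiv ℝ U (s, Φ s x) (1, β s (Φ s x)) with hF'_def
  have hpath : ∀ s x, HasDerivAt (fun r : ℝ => (r, Φ r x)) ((1 : ℝ), β s (Φ s x)) s :=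
    fun s x => (hasDerivAt_id s).prodMk (hΦt s x)
  have huΦ : ∀ s x, HasDerivAt (fun r => u r (Φ r x))
      (fderiv ℝ U (s, Φ s x) (1, β s (Φ s x))) s := fun s x =>
    by have := (hUdiff (s, Φ s x)).hasFDerivAt.comp_hasDerivAt s (hpath s x); exact this
  have hFderiv : ∀ s x, HasDerivAt (fun r => F r x) (F' s x) s := fun s x =>
    (hJderiv s x).mul (huΦ s x)
  -- joint continuity of F and F'
  have hFcont : Continuous fun p : ℝ × Euc d => F p.1 p.2 := by
    apply hJcont.mul
    exact hucont.comp (continuous_fst.prodMk hΦcont)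
  have hΦp : Continuous fun p : ℝ × Euc d => (p.1, Φ p.1 p.2) :=
    continuous_fst.prodMk hΦcont
  have hF'cont : Continuous fun p : ℝ × Euc d => F' p.1 p.2 := by
    apply Continuous.add
    · exact ((hccont.comp hΦp).mul hJcont).mul (hucont.comp hΦp)
    · apply hJcont.mul
      apply Continuous.clm_apply (hUfc.comp hΦp)
      exact continuous_const.prodMk (hβ.continuous.comp hΦp)
  -- uniform bound on a compact neighborhood
  have hKc : IsCompact ((Set.Icc (t - 1) (t + 1)) ×ˢ closure Ω₀) :=
    isCompact_Icc.prod hΩ₀bdd.isCompact_closure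
  obtain ⟨C, hC⟩ := hKc.exists_bound_of_continuousOn hF'cont.continuousOn
  have hfin : IsFiniteMeasure (volume.restrict Ω₀) := by
    constructor
    rw [Measure.restrict_apply_univ]
    exact hΩ₀bdd.measure_lt_top
  -- differentiation under the integral sign
  have hmain : HasDerivAt (fun s => ∫ x in Ω₀, F s x) (∫ x in Ω₀, F' t x) t := by
    have hFs_cont : ∀ s, Continuous (F s) := fun s =>
      (hFcont.comp (continuous_const.prodMk continuous_id))
    have h := hasDerivAt_integral_of_dominated_loc_of_deriv_le
      (μ := volume.restrict Ω₀) (x₀ := t) (F := F) (F' := F') (bound := fun _ => C)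
      (s := Metric.ball t 1) (Metric.ball_mem_nhds t one_pos)
      (Filter.Eventually.of_forall fun s => (hFs_cont s).aestronglyMeasurable)
      (((hFs_cont t).continuousOn.integrableOn_compact
        hΩ₀bdd.isCompact_closure).mono_set subset_closure)
      ((hF'cont.comp (continuous_const.prodMk continuous_id)).aestronglyMeasurable)
      ?_
      (integrable_const C)
      (Filter.Eventually.of_forall fun x s _ => hFderiv s x)
    · exact h.2
    · filter_upwards [ae_restrict_mem hΩ₀meas] with x hx s hs
      have hs' : s ∈ Set.Icc (t - 1) (t + 1) := by
        rw [Real.ball_eq_Ioo] at hs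
        exact Set.Ioo_subset_Icc_self hs
      exact hC (s, x) ⟨hs', subset_closure hx⟩
  -- identification of the function
  have hfun : (fun s => ∫ x in Φ s '' Ω₀, u s x) = fun s => ∫ x in Ω₀, F s x := by
    funext s
    rw [hCOV s (u s)]
    refine integral_congr_ae (Filter.Eventually.of_forall fun x => ?_)
    show |J (s, x)| • u s (Φ s x) = F s x
    rw [abs_of_pos (hJpos s x), smul_eq_mul]
  -- identification of the value
  have hval2 : (∫ x in Φ t '' Ω₀,
      (deriv (fun s => u s x) t + vdiv (fun y => u t y • β t y) x)) = ∫ x in Ω₀, F' t x := by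
    rw [hCOV t _]
    refine integral_congr_ae (Filter.Eventually.of_forall fun x => ?_)
    show |J (t, x)| • (deriv (fun s => u s (Φ t x)) t
      + vdiv (fun y => u t y • β t y) (Φ t x)) = F' t x
    set y := Φ t x with hy
    have hderiv_u : deriv (fun s => u s y) t = fderiv ℝ U (t, y) (1, 0) := by
      have h1 : HasDerivAt (fun r : ℝ => (r, y)) ((1 : ℝ), (0 : Euc d)) t :=
        (hasDerivAt_id t).prodMk (hasDerivAt_const t y)
      exact ((hUdiff (t, y)).hasFDerivAt.comp_hasDerivAt t h1).deriv
    have hvd : vdiv (fun z => u t z • β t z) y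
        = u t y * c (t, y) + fderiv ℝ U (t, y) (0, β t y) := by
      have hf : HasFDerivAt (fun z => u t z • β t z)
          (u t y • Dβ (t, y)
            + ((fderiv ℝ U (t, y)).comp (ContinuousLinearMap.inr ℝ ℝ (Euc d))).smulRight
              (β t y)) y :=
        (hDu t y).smul (hDβ t y)
      show LinearMap.trace ℝ (Euc d) (fderiv ℝ (fun z => u t z • β t z) y).toLinearMap = _
      rw [hf.fderiv, ReynoldsAux.trace_formula]
      simp [ContinuousLinearMap.inr_apply]
      exact Or.inl rfl
    have hsum : fderiv ℝ U (t, y) (1, β t y)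
        = fderiv ℝ U (t, y) (1, 0) + fderiv ℝ U (t, y) (0, β t y) := by
      rw [← map_add]
      norm_num
    rw [hderiv_u, hvd]
    rw [abs_of_pos (hJpos t x), smul_eq_mul]
    show _ = c (t, y) * J (t, x) * u t y + J (t, x) * fderiv ℝ U (t, y) (1, β t y)
    rw [hsum]
    ring
  rw [hval2, hfun]
  exact hmain

end
end

section
/- Reynolds' transport identity for a product (volume form): for every t ∈ ℝ, the function t ↦ ∫_{Ω(t)} u(t,x) v(t,x) dx is differentiable with derivative ∫_{Ω(t)} ( v(t,x) ∂ₜu(t,x) + u(t,x) ∂ₜv(t,x) + v(t,x) · div( β(t,·) u(t,·) )(x) + u(t,x) · ⟨β(t,x), ∇v(t,x)⟩ ) dx, where ∇v(t,x) is the spatial gradient of v and ⟨·,·⟩ is the Euclidean inner product. -/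
open MeasureTheory

noncomputable section

section AuxDet

open Matrix Polynomial
attribute [local instance] Matrix.normedAddCommGroup Matrix.normedSpace
set_option synthInstance.maxHeartbeats 1000000
set_option maxHeartbeats 1000000

variable {d : ℕ}



lemma contDiff_mdet : ContDiff ℝ ⊤ (fun M : Matrix (Fin d) (Fin d) ℝ => M.det) := by
  simp only [Matrix.det_apply]
  apply ContDiff.sum
  intro σ _
  have h : ContDiff ℝ ⊤ (fun M : Matrix (Fin d) (Fin d) ℝ => ∏ i, M (σ i) i) := by
    apply contDiff_prod
    intro i _
    exact (ContDiff.comp (contDiff_apply ℝ ℝ i) (contDiff_apply ℝ (Fin d → ℝ) (σ i)))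
  simpa [Units.smul_def, zsmul_eq_mul] using h.const_smul ((Equiv.Perm.sign σ : ℤ) : ℝ)

lemma hasDerivAt_line_mdet (A H : Matrix (Fin d) (Fin d) ℝ) (hA : A.det ≠ 0) :
    HasDerivAt (fun r : ℝ => (A + r • H).det) ((A.adjugate * H).trace) 0 := by
  have hU : IsUnit A.det := isUnit_iff_ne_zero.mpr hA
  set N : Matrix (Fin d) (Fin d) ℝ := A⁻¹ * H with hN
  have key : ∀ r : ℝ, (A + r • H).det
      = A.det * (1 + N.trace * r + (((1 + (X : ℝ[X]) • N.map C).det).divX.divX.eval r) * r ^ 2) := by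
    intro r
    have h1 : A * (1 + r • N) = A + r • H := by
      rw [mul_add, mul_one, mul_smul_comm, hN, Matrix.mul_nonsing_inv_cancel_left A H hU]
    rw [← h1, det_mul, Matrix.det_one_add_smul r N]
  have h2 : HasDerivAt (fun r : ℝ =>
      A.det * (1 + N.trace * r + (((1 + (X : ℝ[X]) • N.map C).det).divX.divX.eval r) * r ^ 2))
      (A.det * N.trace) 0 := by
    have he : HasDerivAt (fun r : ℝ => (((1 + (X : ℝ[X]) • N.map C).det).divX.divX.eval r) * r ^ 2)
        (0 : ℝ) 0 := by
      have := ((((1 + (X : ℝ[X]) • N.map C).det).divX.divX).hasDerivAt (0:ℝ)).mul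
        (hasDerivAt_pow 2 (0:ℝ))
      exact this.congr_deriv (by simp)
    have hc : HasDerivAt (fun r : ℝ => 1 + N.trace * r) N.trace 0 := by
      exact ((hasDerivAt_const (0:ℝ) (1:ℝ)).add ((hasDerivAt_id (0:ℝ)).const_mul N.trace)).congr_deriv (by simp)
    simpa using (hc.add he).const_mul A.det
  have h3 : A.det * N.trace = (A.adjugate * H).trace := by
    have hadj : A.adjugate = A.det • A⁻¹ := by
      rw [Matrix.inv_def, smul_smul, Ring.inverse_eq_inv', mul_inv_cancel₀ hA, one_smul]
    rw [hadj, smul_mul_assoc, trace_smul, smul_eq_mul, hN]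
  have hfe : (fun r : ℝ => (A + r • H).det) = fun r =>
      A.det * (1 + N.trace * r + (((1 + (X : ℝ[X]) • N.map C).det).divX.divX.eval r) * r ^ 2) :=
    funext key
  rw [← h3, hfe]
  exact h2

lemma fderiv_mdet_apply (A H : Matrix (Fin d) (Fin d) ℝ) (hA : A.det ≠ 0) :
    fderiv ℝ (fun M : Matrix (Fin d) (Fin d) ℝ => M.det) A H = (A.adjugate * H).trace := by
  have hd : HasFDerivAt (fun M : Matrix (Fin d) (Fin d) ℝ => M.det)
      (fderiv ℝ (fun M : Matrix (Fin d) (Fin d) ℝ => M.det) A) A :=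
    (contDiff_mdet.differentiable (by simp) A).hasFDerivAt
  have hL : HasDerivAt (fun r : ℝ => A + r • H) H 0 := by
    exact (((hasDerivAt_id (0:ℝ)).smul_const H).const_add A).congr_deriv (by simp)
  have h1 : HasDerivAt (fun r : ℝ => (A + r • H).det)
      (fderiv ℝ (fun M : Matrix (Fin d) (Fin d) ℝ => M.det) A H) 0 := by
    have hd' : HasFDerivAt (fun M : Matrix (Fin d) (Fin d) ℝ => M.det)
        (fderiv ℝ (fun M : Matrix (Fin d) (Fin d) ℝ => M.det) A) (A + (0:ℝ) • H) := by
      simpa using hd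
    exact hd'.comp_hasDerivAt (0:ℝ) hL
  exact h1.unique (hasDerivAt_line_mdet A H hA)




noncomputable def bE (d : ℕ) : Module.Basis (Fin d) ℝ (Euc d) := (EuclideanSpace.basisFun (Fin d) ℝ).toBasis

noncomputable def toML (d : ℕ) : (Euc d →L[ℝ] Euc d) →ₗ[ℝ] Matrix (Fin d) (Fin d) ℝ :=
  (LinearMap.toMatrix (bE d) (bE d)).toLinearMap ∘ₗ ContinuousLinearMap.coeLM ℝ

noncomputable def toMC (d : ℕ) : (Euc d →L[ℝ] Euc d) →L[ℝ] Matrix (Fin d) (Fin d) ℝ :=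
  LinearMap.toContinuousLinearMap (toML d)

lemma toMC_apply (L : Euc d →L[ℝ] Euc d) :
    toMC d L = LinearMap.toMatrix (bE d) (bE d) L.toLinearMap := rfl

lemma tm_det (L : Euc d →L[ℝ] Euc d) : L.det = (toMC d L).det := by
  rw [toMC_apply, LinearMap.det_toMatrix]

lemma tm_trace (L : Euc d →L[ℝ] Euc d) :
    LinearMap.trace ℝ (Euc d) L.toLinearMap = (toMC d L).trace := by
  rw [toMC_apply, LinearMap.trace_eq_matrix_trace ℝ (bE d)]

lemma tm_comp (A B : Euc d →L[ℝ] Euc d) : toMC d (A.comp B) = toMC d A * toMC d B := by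
  simp only [toMC_apply]
  rw [show (A.comp B).toLinearMap = A.toLinearMap ∘ₗ B.toLinearMap from rfl,
    LinearMap.toMatrix_comp (bE d) (bE d) (bE d)]

lemma bE_toMatrix_apply (L : Euc d →L[ℝ] Euc d) (i j : Fin d) :
    toMC d L i j = L (bE d j) i := by
  simp [toMC_apply, LinearMap.toMatrix_apply, bE]

lemma abs_coord_le_norm (x : Euc d) (i : Fin d) : |x i| ≤ ‖x‖ := by
  have := EuclideanSpace.norm_eq x
  rw [this]
  calc |x i| = Real.sqrt (|x i|^2) := by rw [Real.sqrt_sq_eq_abs]; rw [abs_abs]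
  _ ≤ Real.sqrt (∑ j, ‖x j‖^2) := by
      apply Real.sqrt_le_sqrt
      have : |x i|^2 = ‖x i‖^2 := by rw [Real.norm_eq_abs]
      rw [this]
      exact Finset.single_le_sum (f := fun j => ‖x j‖^2) (fun j _ => sq_nonneg _) (Finset.mem_univ i)

lemma norm_bE (i : Fin d) : ‖bE d i‖ = 1 := by
  simp [bE, EuclideanSpace.basisFun_apply, EuclideanSpace.norm_single]

lemma abs_trace_le (L : Euc d →L[ℝ] Euc d) :
    |LinearMap.trace ℝ (Euc d) L.toLinearMap| ≤ d * ‖L‖ := by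
  rw [tm_trace, Matrix.trace]
  calc |∑ i, (toMC d L).diag i| ≤ ∑ i, |(toMC d L).diag i| := Finset.abs_sum_le_sum_abs _ _
    _ ≤ ∑ _i : Fin d, ‖L‖ := by
        apply Finset.sum_le_sum
        intro i _
        rw [Matrix.diag_apply, bE_toMatrix_apply]
        calc |L (bE d i) i| ≤ ‖L (bE d i)‖ := abs_coord_le_norm _ _
          _ ≤ ‖L‖ * ‖bE d i‖ := L.le_opNorm _
          _ = ‖L‖ := by rw [norm_bE, mul_one]
    _ = d * ‖L‖ := by simp [Finset.sum_const]

lemma trace_smulRight (c : Euc d →L[ℝ] ℝ) (w : Euc d) :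
    LinearMap.trace ℝ (Euc d) ((c.smulRight w).toLinearMap) = c w := by
  rw [tm_trace, Matrix.trace]
  have hw : ∑ i, w i • bE d i = w := by
    have := (bE d).sum_repr w
    simpa [bE, EuclideanSpace.basisFun_repr] using this
  calc ∑ i, (toMC d (c.smulRight w)).diag i = ∑ i, c (bE d i) * w i := by
        apply Finset.sum_congr rfl
        intro i _
        rw [Matrix.diag_apply, bE_toMatrix_apply]
        simp [ContinuousLinearMap.smulRight_apply]
    _ = c w := by
        conv_rhs => rw [← hw]
        rw [map_sum]
        apply Finset.sum_congr rfl
        intro i _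
        rw [_root_.map_smul, smul_eq_mul, mul_comm]

lemma hasDerivAt_clm_det {M : ℝ → (Euc d →L[ℝ] Euc d)} {B : Euc d →L[ℝ] Euc d} {t : ℝ}
    (hM : HasDerivAt M (B.comp (M t)) t) (hdet : (M t).det ≠ 0) :
    HasDerivAt (fun s => (M s).det)
      (LinearMap.trace ℝ (Euc d) B.toLinearMap * (M t).det) t := by
  have hA : HasDerivAt (fun s => toMC d (M s)) (toMC d (B.comp (M t))) t :=
    (toMC d).hasFDerivAt.comp_hasDerivAt t hM
  have hdet' : (toMC d (M t)).det ≠ 0 := by rw [← tm_det]; exact hdet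
  have hdd : HasFDerivAt (fun N : Matrix (Fin d) (Fin d) ℝ => N.det)
      (fderiv ℝ (fun N : Matrix (Fin d) (Fin d) ℝ => N.det) (toMC d (M t))) (toMC d (M t)) :=
    (contDiff_mdet.differentiable (by simp) _).hasFDerivAt
  have h1 : HasDerivAt (fun s => (toMC d (M s)).det)
      (fderiv ℝ (fun N : Matrix (Fin d) (Fin d) ℝ => N.det) (toMC d (M t))
        (toMC d (B.comp (M t)))) t := hdd.comp_hasDerivAt t hA
  rw [fderiv_mdet_apply _ _ hdet', tm_comp] at h1
  have h2 : ((toMC d (M t)).adjugate * (toMC d B * toMC d (M t))).trace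
      = LinearMap.trace ℝ (Euc d) B.toLinearMap * (M t).det := by
    rw [← mul_assoc, Matrix.trace_mul_cycle ((toMC d (M t)).adjugate) (toMC d B) (toMC d (M t)),
      Matrix.mul_adjugate, Matrix.smul_mul, one_mul, Matrix.trace_smul,
      tm_trace, tm_det, smul_eq_mul, mul_comm]
  rw [h2] at h1
  have hfe : (fun s => (M s).det) = fun s => (toMC d (M s)).det := funext fun s => tm_det _
  rw [hfe]
  exact h1

lemma trace_continuous :
    Continuous (fun L : Euc d →L[ℝ] Euc d => LinearMap.trace ℝ (Euc d) L.toLinearMap) :=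
  (LinearMap.toContinuousLinearMap
    ((LinearMap.trace ℝ (Euc d)).comp (ContinuousLinearMap.coeLM ℝ))).continuous

lemma det_continuous :
    Continuous (fun L : Euc d →L[ℝ] Euc d => L.det) := by
  have h : (fun L : Euc d →L[ℝ] Euc d => L.det) = fun L => (toMC d L).det :=
    funext fun L => tm_det L
  rw [h]
  exact contDiff_mdet.continuous.comp (toMC d).continuous

lemma norm_inr_le_one : ‖ContinuousLinearMap.inr ℝ ℝ (Euc d)‖ ≤ 1 := by
  apply ContinuousLinearMap.opNorm_le_bound _ zero_le_one
  intro x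
  simp [Prod.norm_def]

lemma hasFDerivAt_slice {F G : Type*} [NormedAddCommGroup F] [NormedSpace ℝ F]
    [NormedAddCommGroup G] [NormedSpace ℝ G] {f : ℝ × F → G} (hf : ContDiff ℝ 1 f)
    (s : ℝ) (x : F) :
    HasFDerivAt (fun y => f (s, y))
      ((fderiv ℝ f (s, x)).comp (ContinuousLinearMap.inr ℝ ℝ F)) x :=
  ((hf.differentiable one_ne_zero _).hasFDerivAt).comp x (hasFDerivAt_prodMk_right s x)

lemma hasDerivAt_time {F G : Type*} [NormedAddCommGroup F] [NormedSpace ℝ F]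
    [NormedAddCommGroup G] [NormedSpace ℝ G] {f : ℝ × F → G} (hf : ContDiff ℝ 1 f)
    (s : ℝ) (x : F) :
    HasDerivAt (fun r => f (r, x)) (fderiv ℝ f (s, x) (1, 0)) s := by
  have hp : HasDerivAt (fun r : ℝ => (r, x)) ((1 : ℝ), (0 : F)) s :=
    (hasDerivAt_id s).prodMk (hasDerivAt_const s x)
  exact ((hf.differentiable one_ne_zero _).hasFDerivAt).comp_hasDerivAt s hp

lemma linear_ode_zero {A : ℝ → Euc d →L[ℝ] Euc d} {C : ℝ} (hC0 : 0 ≤ C)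
    (hA : ∀ s, ‖A s‖ ≤ C) {z : ℝ → Euc d} (hz : ∀ s, HasDerivAt z (A s (z s)) s)
    {t : ℝ} (hzt : z t = 0) : z 0 = 0 := by
  have hK : ∀ s : ℝ, LipschitzOnWith C.toNNReal (fun w => A s w) (Set.univ : Set (Euc d)) := by
    intro s
    apply LipschitzWith.lipschitzOnWith
    apply (A s).lipschitz.weaken
    rw [← NNReal.coe_le_coe, coe_nnnorm, Real.coe_toNNReal C hC0]
    exact hA s
  set a := min 0 t - 1 with ha
  set b := max 0 t + 1 with hb
  have hta : t ∈ Set.Ioo a b := by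
    constructor
    · have : min 0 t ≤ t := min_le_right 0 t
      linarith
    · have : t ≤ max 0 t := le_max_right 0 t
      linarith
  have h0ab : (0 : ℝ) ∈ Set.Icc a b := by
    constructor
    · have : min 0 t ≤ 0 := min_le_left 0 t
      linarith
    · have : (0:ℝ) ≤ max 0 t := le_max_left 0 t
      linarith
  have key : Set.EqOn z (fun _ => (0 : Euc d)) (Set.Icc a b) := by
    apply ODE_solution_unique_of_mem_Icc (v := fun s w => A s w)
      (s := fun _ => (Set.univ : Set (Euc d))) (fun s _ => hK s) hta
    · exact fun r _ => (hz r).continuousAt.continuousWithinAt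
    · exact fun r _ => hz r
    · exact fun _ _ => trivial
    · exact continuousOn_const
    · intro r _
      simpa using hasDerivAt_const r (0 : Euc d)
    · exact fun _ _ => trivial
    · simpa using hzt
  exact key h0ab

end AuxDet

set_option synthInstance.maxHeartbeats 1000000 in
set_option maxHeartbeats 4000000 in
/-- Reynolds' transport identity for a product (volume form):
`d/dt ∫_{Ω(t)} u v dx = ∫_{Ω(t)} (v ∂ₜu + u ∂ₜv + v div(β u) + u ⟨β, ∇v⟩) dx`. -/
theorem reynolds_transport_product
    (d : ℕ) (hd : 1 ≤ d)
    (β : ℝ → Euc d → Euc d)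
    (hβ : ContDiff ℝ 1 (fun p : ℝ × Euc d => β p.1 p.2))
    (hβbdd : ∃ C : ℝ, ∀ p : ℝ × Euc d,
      ‖fderiv ℝ (fun q : ℝ × Euc d => β q.1 q.2) p‖ ≤ C)
    (Φ : ℝ → Euc d → Euc d)
    (hΦ0 : ∀ x, Φ 0 x = x)
    (hΦt : ∀ t x, HasDerivAt (fun s => Φ s x) (β t (Φ t x)) t)
    (hΦC1 : ContDiff ℝ 1 (fun p : ℝ × Euc d => Φ p.1 p.2))
    (hΦinj : ∀ t : ℝ, Function.Injective (Φ t))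
    (DΦ : ℝ → Euc d → Euc d →L[ℝ] Euc d)
    (hDΦ : ∀ t x, HasFDerivAt (Φ t) (DΦ t x) x)
    (hDΦcont : Continuous fun p : ℝ × Euc d => DΦ p.1 p.2)
    (hDΦt : ∀ t x, HasDerivAt (fun s => DΦ s x)
        ((fderiv ℝ (β t) (Φ t x)).comp (DΦ t x)) t)
    (Ω₀ : Set (Euc d)) (hΩ₀bdd : Bornology.IsBounded Ω₀) (hΩ₀meas : MeasurableSet Ω₀)
    (u v : ℝ → Euc d → ℝ)
    (hu : ContDiff ℝ 1 (fun p : ℝ × Euc d => u p.1 p.2))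
    (hv : ContDiff ℝ 1 (fun p : ℝ × Euc d => v p.1 p.2))
    (hubdd : ∃ C : ℝ, ∀ p : ℝ × Euc d,
      |u p.1 p.2| ≤ C ∧ ‖fderiv ℝ (fun q : ℝ × Euc d => u q.1 q.2) p‖ ≤ C)
    (hvbdd : ∃ C : ℝ, ∀ p : ℝ × Euc d,
      |v p.1 p.2| ≤ C ∧ ‖fderiv ℝ (fun q : ℝ × Euc d => v q.1 q.2) p‖ ≤ C) :
    ∀ t : ℝ,
      HasDerivAt (fun s => ∫ x in Φ s '' Ω₀, u s x * v s x)
        (∫ x in Φ t '' Ω₀,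
          (v t x * deriv (fun s => u s x) t
            + u t x * deriv (fun s => v s x) t
            + v t x * vdiv (fun y => u t y • β t y) x
            + u t x * (inner ℝ (β t x) (gradient (v t) x) : ℝ))) t := by
  classical
  obtain ⟨C, hC⟩ := hβbdd
  have hC0 : 0 ≤ C := le_trans (norm_nonneg _) (hC (0, 0))
  -- the spatial derivative of β
  set Bf : ℝ → Euc d → (Euc d →L[ℝ] Euc d) := fun s x =>
    (fderiv ℝ (fun p : ℝ × Euc d => β p.1 p.2) (s, x)).comp
      (ContinuousLinearMap.inr ℝ ℝ (Euc d)) with hBf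
  have hβx : ∀ s x, HasFDerivAt (β s) (Bf s x) x := by
    intro s x
    exact hasFDerivAt_slice hβ s x
  have hBnorm : ∀ s x, ‖Bf s x‖ ≤ C := by
    intro s x
    calc ‖Bf s x‖ ≤ ‖fderiv ℝ (fun p : ℝ × Euc d => β p.1 p.2) (s, x)‖
        * ‖ContinuousLinearMap.inr ℝ ℝ (Euc d)‖ := ContinuousLinearMap.opNorm_comp_le _ _
      _ ≤ C * 1 := by
          apply mul_le_mul (hC (s, x)) norm_inr_le_one (norm_nonneg _) hC0
      _ = C := mul_one C
  have hΦcont : Continuous (fun p : ℝ × Euc d => Φ p.1 p.2) := hΦC1.continuous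
  have hgraph : Continuous (fun p : ℝ × Euc d => (p.1, Φ p.1 p.2)) :=
    continuous_fst.prodMk hΦcont
  have hBcont : Continuous (fun p : ℝ × Euc d => Bf p.1 (Φ p.1 p.2)) := by
    apply Continuous.clm_comp _ continuous_const
    exact (hβ.continuous_fderiv one_ne_zero).comp hgraph
  -- θ : trace of spatial derivative of β along the flow
  set θ : ℝ → Euc d → ℝ := fun s y =>
    LinearMap.trace ℝ (Euc d) (Bf s (Φ s y)).toLinearMap with hθ
  have hθcont : Continuous (fun p : ℝ × Euc d => θ p.1 p.2) :=
    trace_continuous.comp hBcont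
  -- DΦ at time 0 is the identity
  have hDΦ0 : ∀ y, DΦ 0 y = ContinuousLinearMap.id ℝ (Euc d) := by
    intro y
    have h1 : HasFDerivAt (Φ 0) (DΦ 0 y) y := hDΦ 0 y
    have h2 : HasFDerivAt (Φ 0) (ContinuousLinearMap.id ℝ (Euc d)) y := by
      have : Φ 0 = fun x => x := funext hΦ0
      rw [this]
      exact hasFDerivAt_id y
    exact h1.unique h2
  -- injectivity of DΦ
  have hDinj : ∀ s y, Function.Injective (DΦ s y) := by
    intro s y
    have hker : ∀ w, DΦ s y w = 0 → w = 0 := by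
      intro w hw
      set z : ℝ → Euc d := fun r => DΦ r y w with hzdef
      have hz : ∀ r, HasDerivAt z (Bf r (Φ r y) (z r)) r := by
        intro r
        have h1 := (hDΦt r y).clm_apply (hasDerivAt_const r w)
        have h2 : (fderiv ℝ (β r) (Φ r y)) = Bf r (Φ r y) := (hβx r (Φ r y)).fderiv
        simpa [hzdef, h2] using h1
      have h0 : z 0 = 0 :=
        linear_ode_zero hC0 (fun r => hBnorm r (Φ r y)) hz (t := s) hw
      rw [hzdef] at h0
      simp only [hDΦ0 y] at h0
      simpa using h0
    intro w1 w2 h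
    have : DΦ s y (w1 - w2) = 0 := by rw [map_sub, h, sub_self]
    have := hker _ this
    exact sub_eq_zero.mp this
  -- determinant of DΦ is everywhere nonzero
  have hδne : ∀ s y, (DΦ s y).det ≠ 0 := by
    intro s y hdet
    have hbot := LinearMap.bot_lt_ker_of_det_eq_zero (f := ((DΦ s y) : Euc d →ₗ[ℝ] Euc d)) hdet
    have hker : LinearMap.ker ((DΦ s y) : Euc d →ₗ[ℝ] Euc d) = ⊥ := by
      apply LinearMap.ker_eq_bot.mpr
      exact hDinj s y
    rw [hker] at hbot
    exact lt_irrefl _ hbot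
  -- positivity of the determinant
  have hδcont1 : ∀ y, Continuous (fun s => (DΦ s y).det) := by
    intro y
    exact det_continuous.comp (hDΦcont.comp (continuous_id.prodMk continuous_const))
  have hδ0 : ∀ y, (DΦ 0 y).det = 1 := by
    intro y
    rw [hDΦ0 y]
    simp [ContinuousLinearMap.det]
  have hδpos : ∀ s y, 0 < (DΦ s y).det := by
    intro s y
    by_contra hle
    push_neg at hle
    have hlt : (DΦ s y).det < 0 := lt_of_le_of_ne hle (hδne s y)
    have hiv := intermediate_value_uIcc
      (f := fun r => (DΦ r y).det) (a := (0:ℝ)) (b := s) ((hδcont1 y).continuousOn)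
    have h0mem : (0:ℝ) ∈ Set.uIcc ((DΦ 0 y).det) ((DΦ s y).det) := by
      rw [hδ0 y]
      rw [Set.mem_uIcc]
      right
      exact ⟨le_of_lt hlt, zero_le_one⟩
    obtain ⟨r, _, hr⟩ := hiv h0mem
    exact hδne r y hr
  -- derivative of the determinant along the flow
  have hδds : ∀ s y, HasDerivAt (fun r => (DΦ r y).det) (θ s y * (DΦ s y).det) s := by
    intro s y
    apply hasDerivAt_clm_det (M := fun r => DΦ r y) (B := Bf s (Φ s y))
    · have h2 : (fderiv ℝ (β s) (Φ s y)) = Bf s (Φ s y) := (hβx s (Φ s y)).fderiv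
      rw [← h2]
      exact hDΦt s y
    · exact hδne s y
  -- path derivatives of u and v along the flow
  have hpath : ∀ s y, HasDerivAt (fun r : ℝ => (r, Φ r y)) ((1:ℝ), β s (Φ s y)) s := by
    intro s y
    exact (hasDerivAt_id s).prodMk (hΦt s y)
  set au : ℝ → Euc d → ℝ := fun s y =>
    fderiv ℝ (fun p : ℝ × Euc d => u p.1 p.2) (s, Φ s y) (1, β s (Φ s y)) with hau
  set av : ℝ → Euc d → ℝ := fun s y =>
    fderiv ℝ (fun p : ℝ × Euc d => v p.1 p.2) (s, Φ s y) (1, β s (Φ s y)) with hav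
  have hus : ∀ s y, HasDerivAt (fun r => u r (Φ r y)) (au s y) s := by
    intro s y
    exact ((hu.differentiable one_ne_zero _).hasFDerivAt).comp_hasDerivAt s (hpath s y)
  have hvs : ∀ s y, HasDerivAt (fun r => v r (Φ r y)) (av s y) s := by
    intro s y
    exact ((hv.differentiable one_ne_zero _).hasFDerivAt).comp_hasDerivAt s (hpath s y)
  -- the transported integrand and its derivative
  set g : ℝ → Euc d → ℝ := fun s y =>
    (DΦ s y).det * (u s (Φ s y) * v s (Φ s y)) with hgdef
  set g' : ℝ → Euc d → ℝ := fun s y =>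
    θ s y * (DΦ s y).det * (u s (Φ s y) * v s (Φ s y))
      + (DΦ s y).det * (au s y * v s (Φ s y) + u s (Φ s y) * av s y) with hg'def
  have hgs : ∀ s y, HasDerivAt (fun r => g r y) (g' s y) s := by
    intro s y
    exact (hδds s y).mul ((hus s y).mul (hvs s y))
  -- change of variables
  have hCOV : ∀ (s : ℝ) (ψ : Euc d → ℝ),
      ∫ x in Φ s '' Ω₀, ψ x = ∫ y in Ω₀, (DΦ s y).det * ψ (Φ s y) := by
    intro s ψ
    rw [integral_image_eq_integral_abs_det_fderiv_smul volume hΩ₀meas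
      (fun y _ => (hDΦ s y).hasFDerivWithinAt) ((hΦinj s).injOn) ψ]
    have : (fun y => |(DΦ s y).det| • ψ (Φ s y))
        = fun y => (DΦ s y).det * ψ (Φ s y) := by
      funext y
      rw [abs_of_pos (hδpos s y), smul_eq_mul]
    rw [this]
  have hFeq : (fun s => ∫ x in Φ s '' Ω₀, u s x * v s x)
      = fun s => ∫ y in Ω₀, g s y := by
    funext s
    exact hCOV s (fun x => u s x * v s x)
  intro t
  -- continuity of g and g'
  have hucont := hu.continuous
  have hvcont := hv.continuous
  have hδcont : Continuous (fun p : ℝ × Euc d => (DΦ p.1 p.2).det) :=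
    det_continuous.comp hDΦcont
  have huΦ : Continuous (fun p : ℝ × Euc d => u p.1 (Φ p.1 p.2)) := hucont.comp hgraph
  have hvΦ : Continuous (fun p : ℝ × Euc d => v p.1 (Φ p.1 p.2)) := hvcont.comp hgraph
  have hβΦ : Continuous (fun p : ℝ × Euc d => β p.1 (Φ p.1 p.2)) := hβ.continuous.comp hgraph
  have haucont : Continuous (fun p : ℝ × Euc d => au p.1 p.2) := by
    apply Continuous.clm_apply
    · exact (hu.continuous_fderiv one_ne_zero).comp hgraph
    · exact continuous_const.prodMk hβΦ
  have havcont : Continuous (fun p : ℝ × Euc d => av p.1 p.2) := by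
    apply Continuous.clm_apply
    · exact (hv.continuous_fderiv one_ne_zero).comp hgraph
    · exact continuous_const.prodMk hβΦ
  have hgcont : Continuous (fun p : ℝ × Euc d => g p.1 p.2) :=
    hδcont.mul (huΦ.mul hvΦ)
  have hg'cont : Continuous (fun p : ℝ × Euc d => g' p.1 p.2) :=
    ((hθcont.mul hδcont).mul (huΦ.mul hvΦ)).add
      (hδcont.mul ((haucont.mul hvΦ).add (huΦ.mul havcont)))
  -- compactness bound
  have hKc : IsCompact (closure Ω₀) := hΩ₀bdd.isCompact_closure
  have hKPc : IsCompact ((Metric.closedBall t 1) ×ˢ closure Ω₀) :=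
    (isCompact_closedBall t 1).prod hKc
  obtain ⟨Cg, hCg⟩ := hKPc.exists_bound_of_continuousOn hg'cont.continuousOn
  -- measure finiteness
  have hμ : volume Ω₀ < ⊤ :=
    lt_of_le_of_lt (measure_mono subset_closure) hKc.measure_lt_top
  -- apply differentiation under the integral sign
  have hmeas : ∀ᶠ s in nhds t, AEStronglyMeasurable (g s) (volume.restrict Ω₀) := by
    apply Filter.Eventually.of_forall
    intro s
    exact ((hgcont.comp (Continuous.prodMk_right s)).aestronglyMeasurable).restrict
  have hint : Integrable (g t) (volume.restrict Ω₀) := by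
    have h1 : IntegrableOn (g t) (closure Ω₀) volume :=
      (hgcont.comp (Continuous.prodMk_right t)).continuousOn.integrableOn_compact hKc
    exact h1.mono_set subset_closure
  have h'meas : AEStronglyMeasurable (g' t) (volume.restrict Ω₀) :=
    ((hg'cont.comp (Continuous.prodMk_right t)).aestronglyMeasurable).restrict
  have hbound : ∀ᵐ y ∂(volume.restrict Ω₀), ∀ s ∈ Metric.ball t 1, ‖g' s y‖ ≤ Cg := by
    filter_upwards [ae_restrict_mem hΩ₀meas] with y hy
    intro s hs
    exact hCg (s, y) ⟨Metric.ball_subset_closedBall hs, subset_closure hy⟩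
  have hbint : Integrable (fun _ : Euc d => Cg) (volume.restrict Ω₀) :=
    MeasureTheory.integrableOn_const hμ.ne
  have hderiv : ∀ᵐ y ∂(volume.restrict Ω₀), ∀ s ∈ Metric.ball t 1,
      HasDerivAt (fun r => g r y) (g' s y) s := by
    apply Filter.Eventually.of_forall
    intro y s _
    exact hgs s y
  have hmain := hasDerivAt_integral_of_dominated_loc_of_deriv_le (Metric.ball_mem_nhds t one_pos) hmeas hint h'meas
    hbound hbint hderiv
  have hF : HasDerivAt (fun s => ∫ y in Ω₀, g s y) (∫ y in Ω₀, g' t y) t := hmain.2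
  rw [hFeq]
  -- identify the integrand of the derivative
  have hident : (∫ x in Φ t '' Ω₀,
      (v t x * deriv (fun s => u s x) t
        + u t x * deriv (fun s => v s x) t
        + v t x * vdiv (fun y => u t y • β t y) x
        + u t x * (inner ℝ (β t x) (gradient (v t) x) : ℝ)))
      = ∫ y in Ω₀, g' t y := by
    rw [hCOV t]
    apply integral_congr_ae
    apply Filter.EventuallyEq.of_eq
    funext y
    set x := Φ t y with hx
    -- partial time derivatives
    have hpu : deriv (fun s => u s x) t
        = fderiv ℝ (fun p : ℝ × Euc d => u p.1 p.2) (t, x) (1, 0) :=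
      (hasDerivAt_time hu t x).deriv
    have hpv : deriv (fun s => v s x) t
        = fderiv ℝ (fun p : ℝ × Euc d => v p.1 p.2) (t, x) (1, 0) :=
      (hasDerivAt_time hv t x).deriv
    -- spatial derivatives
    have hux : HasFDerivAt (u t)
        ((fderiv ℝ (fun p : ℝ × Euc d => u p.1 p.2) (t, x)).comp
          (ContinuousLinearMap.inr ℝ ℝ (Euc d))) x := hasFDerivAt_slice hu t x
    have hvx : HasFDerivAt (v t)
        ((fderiv ℝ (fun p : ℝ × Euc d => v p.1 p.2) (t, x)).comp
          (ContinuousLinearMap.inr ℝ ℝ (Euc d))) x := hasFDerivAt_slice hv t x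
    -- decomposition of au and av
    have hone : ((1:ℝ), β t x) = ((1:ℝ), (0 : Euc d)) + ((0:ℝ), β t x) := by
      rw [Prod.mk_add_mk, add_zero, zero_add]
    have hauval : fderiv ℝ (fun p : ℝ × Euc d => u p.1 p.2) (t, x) (1, β t x)
        = fderiv ℝ (fun p : ℝ × Euc d => u p.1 p.2) (t, x) (1, 0)
        + (fderiv ℝ (fun p : ℝ × Euc d => u p.1 p.2) (t, x)).comp
            (ContinuousLinearMap.inr ℝ ℝ (Euc d)) (β t x) := by
      simp only [hone, map_add, ContinuousLinearMap.coe_comp', Function.comp_apply,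
        ContinuousLinearMap.inr_apply]
    have havval : fderiv ℝ (fun p : ℝ × Euc d => v p.1 p.2) (t, x) (1, β t x)
        = fderiv ℝ (fun p : ℝ × Euc d => v p.1 p.2) (t, x) (1, 0)
        + (fderiv ℝ (fun p : ℝ × Euc d => v p.1 p.2) (t, x)).comp
            (ContinuousLinearMap.inr ℝ ℝ (Euc d)) (β t x) := by
      simp only [hone, map_add, ContinuousLinearMap.coe_comp', Function.comp_apply,
        ContinuousLinearMap.inr_apply]
    -- gradient term
    have hgrad : (inner ℝ (β t x) (gradient (v t) x) : ℝ)
        = (fderiv ℝ (fun p : ℝ × Euc d => v p.1 p.2) (t, x)).comp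
            (ContinuousLinearMap.inr ℝ ℝ (Euc d)) (β t x) := by
      rw [real_inner_comm]
      rw [gradient, ← hvx.fderiv]
      exact InnerProductSpace.toDual_symm_apply
    -- divergence term
    have hdiv : vdiv (fun z => u t z • β t z) x
        = u t x * θ t y
          + (fderiv ℝ (fun p : ℝ × Euc d => u p.1 p.2) (t, x)).comp
              (ContinuousLinearMap.inr ℝ ℝ (Euc d)) (β t x) := by
      have hW : HasFDerivAt (fun z => u t z • β t z)
          (u t x • Bf t x
            + ((fderiv ℝ (fun p : ℝ × Euc d => u p.1 p.2) (t, x)).comp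
              (ContinuousLinearMap.inr ℝ ℝ (Euc d))).smulRight (β t x)) x :=
        hux.smul (hβx t x)
      rw [vdiv, hW.fderiv]
      rw [ContinuousLinearMap.coe_add, map_add, ContinuousLinearMap.coe_smul, _root_.map_smul,
        trace_smulRight]
      simp only [hθ, ← hx, smul_eq_mul]
    rw [hpu, hpv, hgrad, hdiv]
    simp only [hg'def, hθ, hau, hav, ← hx]
    rw [hauval, havval]
    ring
  rw [hident]
  exact hF
end
end

section
/- Mass balance law for the convection–diffusion equation in an evolving domain: suppose u satisfies the PDE ∂ₜu(t,x) + div( β(t,·) u(t,·) )(x) − D·Δu(t,x) = f(t,x) for all t ∈ ℝ and all x ∈ Ω(t), and the integrated homogeneous Neumann condition ∫_{Ω(t)} Δu(t,x) dx = 0 for all t (which follows from the flux condition n·D∇u = 0 on ∂Ω(t) by the divergence theorem). Then for every t the function t ↦ ∫_{Ω(t)} u(t,x) dx is differentiable with derivative ∫_{Ω(t)} f(t,x) dx. -/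
open MeasureTheory

noncomputable section

/-- Laplacian of a scalar function: the divergence of its gradient. -/
noncomputable def lapl {d : ℕ} (g : Euc d → ℝ) (x : Euc d) : ℝ :=
  LinearMap.trace ℝ (Euc d) (fderiv ℝ (gradient g) x).toLinearMap


open Matrix Finset

/-- Derivative of the determinant of a matrix path, row form. -/
lemma my_hasDerivAt_det {d : ℕ} {A : ℝ → Matrix (Fin d) (Fin d) ℝ}
    {A' : Matrix (Fin d) (Fin d) ℝ} {t : ℝ}
    (h : ∀ i j, HasDerivAt (fun s => A s i j) (A' i j) t) :
    HasDerivAt (fun s => (A s).det)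
      (∑ i, ((A t).updateRow i (A' i)).det) t := by
  have hdet : ∀ M : Matrix (Fin d) (Fin d) ℝ,
      M.det = ∑ σ : Equiv.Perm (Fin d), (Equiv.Perm.sign σ : ℝ) * ∏ i, M i (σ i) := by
    intro M
    rw [← Matrix.det_transpose M, Matrix.det_apply']
    simp [Matrix.transpose_apply]
  simp only [hdet]
  have key : ∀ σ ∈ (univ : Finset (Equiv.Perm (Fin d))),
      HasDerivAt (fun s => (Equiv.Perm.sign σ : ℝ) * ∏ i, A s i (σ i))
        ((Equiv.Perm.sign σ : ℝ) *
          ∑ i, (∏ j ∈ univ.erase i, A t j (σ j)) • A' i (σ i)) t :=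
    fun σ _ => (HasDerivAt.fun_finsetProd (fun i _ => h i (σ i))).const_mul _
  refine (HasDerivAt.fun_sum key).congr_deriv ?_
  rw [Finset.sum_comm]
  refine Finset.sum_congr rfl fun σ _ => ?_
  rw [Finset.mul_sum]
  refine Finset.sum_congr rfl fun i _ => ?_
  have hprod : (∏ j, ((A t).updateRow i (A' i)) j (σ j))
      = A' i (σ i) * ∏ j ∈ univ.erase i, A t j (σ j) := by
    rw [← Finset.mul_prod_erase _ _ (Finset.mem_univ i), Matrix.updateRow_self]
    congr 1
    exact Finset.prod_congr rfl fun j hj =>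
      by rw [Matrix.updateRow_ne (Finset.ne_of_mem_erase hj)]
  rw [hprod]
  simp [smul_eq_mul]
  ring

/-- Liouville/Jacobi: replacing each row by the corresponding row of `B * M`. -/
lemma my_sum_det_updateRow_mul {d : ℕ} (M B : Matrix (Fin d) (Fin d) ℝ) :
    (∑ i, (M.updateRow i ((B * M) i)).det) = B.trace * M.det := by
  have : ∀ i, (M.updateRow i ((B * M) i)).det = B i i * M.det := by
    intro i
    have hrow : (B * M) i = ∑ k, (B i k) • M k := by
      funext j
      simp [Matrix.mul_apply, Finset.sum_apply]
    rw [hrow, Matrix.det_updateRow_sum, smul_eq_mul]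
  simp only [this, Matrix.trace, Matrix.diag]
  rw [Finset.sum_mul]


open Matrix Finset

variable {d : ℕ}

/-- Standard basis of `EuclideanSpace ℝ (Fin d)`. -/
noncomputable abbrev eb (d : ℕ) : Module.Basis (Fin d) ℝ (EuclideanSpace ℝ (Fin d)) :=
  PiLp.basisFun 2 ℝ (Fin d)

noncomputable def clmMat (T : EuclideanSpace ℝ (Fin d) →L[ℝ] EuclideanSpace ℝ (Fin d)) :
    Matrix (Fin d) (Fin d) ℝ :=
  LinearMap.toMatrix (eb d) (eb d) T.toLinearMap

lemma clmMat_apply (T : EuclideanSpace ℝ (Fin d) →L[ℝ] EuclideanSpace ℝ (Fin d)) (i j : Fin d) :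
    clmMat T i j = T (eb d j) i := by
  simp [clmMat, LinearMap.toMatrix_apply]

lemma clmMat_det (T : EuclideanSpace ℝ (Fin d) →L[ℝ] EuclideanSpace ℝ (Fin d)) :
    (clmMat T).det = LinearMap.det T.toLinearMap := by
  simp [clmMat, LinearMap.det_toMatrix]

lemma clmMat_trace (T : EuclideanSpace ℝ (Fin d) →L[ℝ] EuclideanSpace ℝ (Fin d)) :
    (clmMat T).trace = LinearMap.trace ℝ _ T.toLinearMap := by
  rw [LinearMap.trace_eq_matrix_trace ℝ (eb d)]; rfl

lemma clmMat_comp (S T : EuclideanSpace ℝ (Fin d) →L[ℝ] EuclideanSpace ℝ (Fin d)) :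
    clmMat (S.comp T) = clmMat S * clmMat T := by
  simp [clmMat, ContinuousLinearMap.coe_comp, LinearMap.toMatrix_comp (eb d) (eb d) (eb d)]

lemma continuous_clmMat :
    Continuous fun T : EuclideanSpace ℝ (Fin d) →L[ℝ] EuclideanSpace ℝ (Fin d) => clmMat T := by
  apply continuous_matrix
  intro i j
  simp only [clmMat_apply]
  exact (continuous_apply i).comp ((by fun_prop : Continuous fun a : EuclideanSpace ℝ (Fin d) => a.ofLp).comp
    ((ContinuousLinearMap.apply ℝ (EuclideanSpace ℝ (Fin d)) (eb d j)).continuous))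

lemma hasDerivAt_clmMat {T : ℝ → EuclideanSpace ℝ (Fin d) →L[ℝ] EuclideanSpace ℝ (Fin d)}
    {L : EuclideanSpace ℝ (Fin d) →L[ℝ] EuclideanSpace ℝ (Fin d)} {t : ℝ}
    (hT : HasDerivAt T L t) (i j : Fin d) :
    HasDerivAt (fun s => clmMat (T s) i j) (clmMat L i j) t := by
  simp only [clmMat_apply]
  have h1 := ((ContinuousLinearMap.apply ℝ (EuclideanSpace ℝ (Fin d))
      (eb d j)).hasFDerivAt.comp_hasDerivAt t hT)
  have h2 := ((EuclideanSpace.proj i : EuclideanSpace ℝ (Fin d) →L[ℝ] ℝ)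
      |>.hasFDerivAt.comp_hasDerivAt t h1)
  simpa [Function.comp_def] using h2

/-- Jacobi's formula for a path satisfying `T' = B ∘ T`. -/
lemma my_jacobi {T : ℝ → EuclideanSpace ℝ (Fin d) →L[ℝ] EuclideanSpace ℝ (Fin d)}
    {B : EuclideanSpace ℝ (Fin d) →L[ℝ] EuclideanSpace ℝ (Fin d)} {t : ℝ}
    (hT : HasDerivAt T (B.comp (T t)) t) :
    HasDerivAt (fun s => LinearMap.det (T s).toLinearMap)
      (LinearMap.trace ℝ _ B.toLinearMap * LinearMap.det (T t).toLinearMap) t := by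
  have h := my_hasDerivAt_det (A := fun s => clmMat (T s))
    (A' := clmMat (B.comp (T t))) (t := t) (fun i j => hasDerivAt_clmMat hT i j)
  rw [clmMat_comp] at h
  rw [my_sum_det_updateRow_mul, clmMat_trace, clmMat_det] at h
  simpa only [clmMat_det] using h

open MeasureTheory in
lemma continuous_clmTrace {d : ℕ} :
    Continuous fun T : EuclideanSpace ℝ (Fin d) →L[ℝ] EuclideanSpace ℝ (Fin d) =>
      LinearMap.trace ℝ _ T.toLinearMap := by
  have h : (fun T : EuclideanSpace ℝ (Fin d) →L[ℝ] EuclideanSpace ℝ (Fin d) =>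
      LinearMap.trace ℝ _ T.toLinearMap) = fun T => (clmMat T).trace :=
    funext fun T => (clmMat_trace T).symm
  rw [h]
  exact continuous_clmMat.matrix_trace

lemma my_trace_smulRight {d : ℕ} (φ : EuclideanSpace ℝ (Fin d) →L[ℝ] ℝ)
    (w : EuclideanSpace ℝ (Fin d)) :
    LinearMap.trace ℝ _ ((φ.smulRight w).toLinearMap) = φ w := by
  have h1 : (φ.smulRight w).toLinearMap
      = (LinearMap.toSpanSingleton ℝ _ w).comp (φ : EuclideanSpace ℝ (Fin d) →ₗ[ℝ] ℝ) := by
    ext v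
    simp [LinearMap.toSpanSingleton_apply]
  rw [h1, LinearMap.trace_comp_comm']
  have h2 : (φ : EuclideanSpace ℝ (Fin d) →ₗ[ℝ] ℝ).comp (LinearMap.toSpanSingleton ℝ _ w)
      = φ w • LinearMap.id := by
    ext
    simp [LinearMap.toSpanSingleton_apply, smul_eq_mul, mul_comm]
  rw [h2, _root_.map_smul, LinearMap.trace_id]
  simp

lemma my_ode_pos {h c : ℝ → ℝ} (hc : Continuous c)
    (hh : ∀ s, HasDerivAt h (c s * h s) s) (h0 : h 0 = 1) (t : ℝ) : 0 < h t := by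
  set I : ℝ → ℝ := fun s => ∫ r in (0:ℝ)..s, c r with hI
  have hId : ∀ s, HasDerivAt I (c s) s := fun s =>
    intervalIntegral.integral_hasDerivAt_right (hc.intervalIntegrable 0 s)
      (hc.stronglyMeasurableAtFilter MeasureTheory.volume (nhds s)) hc.continuousAt
  have hg : ∀ s, HasDerivAt (fun r => h r * Real.exp (-I r)) 0 s := by
    intro s
    have hexp : HasDerivAt (fun r => Real.exp (-I r)) (Real.exp (-I s) * (-c s)) s :=
      ((hId s).neg).exp
    have := (hh s).fun_mul hexp
    refine this.congr_deriv ?_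
    ring
  have hconst : h t * Real.exp (-I t) = 1 := by
    have hdiff : Differentiable ℝ (fun r => h r * Real.exp (-I r)) :=
      fun s => (hg s).differentiableAt
    have hcst := is_const_of_deriv_eq_zero hdiff (fun s => (hg s).deriv) t 0
    have hI0 : I 0 = 0 := by simp [hI]
    rw [hcst, hI0, h0]
    simp
  nlinarith [Real.exp_pos (-I t)]

lemma vdiv_smul {d : ℕ} {g : Euc d → ℝ} {w : Euc d → Euc d} {x : Euc d}
    (hg : DifferentiableAt ℝ g x) (hw : DifferentiableAt ℝ w x) :
    vdiv (fun y => g y • w y) x = fderiv ℝ g x (w x) + g x * vdiv w x := by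
  have h := hg.hasFDerivAt.smul hw.hasFDerivAt
  rw [vdiv, show (fun y => g y • w y) = g • w from rfl, h.fderiv]
  rw [ContinuousLinearMap.coe_add, map_add, ContinuousLinearMap.coe_smul, _root_.map_smul,
    my_trace_smulRight]
  rw [vdiv]
  ring_nf

lemma lapl_continuous {d : ℕ} {g : Euc d → ℝ} (hg : ContDiff ℝ 2 g) :
    Continuous (lapl g) := by
  have hf1 : ContDiff ℝ 1 (fderiv ℝ g) := hg.fderiv_right (by norm_num)
  set e₀ : (Euc d →L[ℝ] ℝ) →ₗ[ℝ] Euc d :=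
    { toFun := fun L => (InnerProductSpace.toDual ℝ (Euc d)).symm L
      map_add' := fun a b => by simp
      map_smul' := fun c a => by simp } with he₀
  set e : (Euc d →L[ℝ] ℝ) →L[ℝ] Euc d := e₀.toContinuousLinearMap with he
  have hgrad : gradient g = fun x => e (fderiv ℝ g x) := by
    funext x
    rfl
  have hfd : ∀ x, fderiv ℝ (gradient g) x = e.comp (fderiv ℝ (fderiv ℝ g) x) := by
    intro x
    rw [hgrad]
    exact (e.hasFDerivAt.comp x (hf1.differentiable one_ne_zero x).hasFDerivAt).fderiv
  have h2 : lapl g = fun x =>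
      LinearMap.trace ℝ (Euc d) ((e.comp (fderiv ℝ (fderiv ℝ g) x)).toLinearMap) := by
    funext x
    rw [lapl, hfd]
  rw [h2]
  exact continuous_clmTrace.comp (continuous_const.clm_comp (hf1.continuous_fderiv one_ne_zero))

/-- Mass balance law for the convection–diffusion equation in an evolving domain:
if `∂ₜu + div(β u) − D Δu = f` on `Ω(t)` and `∫_{Ω(t)} Δu = 0` for all `t`, then
`t ↦ ∫_{Ω(t)} u(t,x) dx` is differentiable with derivative `∫_{Ω(t)} f(t,x) dx`. -/
theorem mass_balance_convection_diffusion
    (d : ℕ) (hd : 1 ≤ d)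
    (β : ℝ → Euc d → Euc d)
    (hβ : ContDiff ℝ 1 (fun p : ℝ × Euc d => β p.1 p.2))
    (hβbdd : ∃ C : ℝ, ∀ p : ℝ × Euc d,
      ‖fderiv ℝ (fun q : ℝ × Euc d => β q.1 q.2) p‖ ≤ C)
    (Φ : ℝ → Euc d → Euc d)
    (hΦ0 : ∀ x, Φ 0 x = x)
    (hΦt : ∀ t x, HasDerivAt (fun s => Φ s x) (β t (Φ t x)) t)
    (hΦC1 : ContDiff ℝ 1 (fun p : ℝ × Euc d => Φ p.1 p.2))
    (hΦinj : ∀ t : ℝ, Function.Injective (Φ t))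
    (DΦ : ℝ → Euc d → Euc d →L[ℝ] Euc d)
    (hDΦ : ∀ t x, HasFDerivAt (Φ t) (DΦ t x) x)
    (hDΦcont : Continuous fun p : ℝ × Euc d => DΦ p.1 p.2)
    (hDΦt : ∀ t x, HasDerivAt (fun s => DΦ s x)
        ((fderiv ℝ (β t) (Φ t x)).comp (DΦ t x)) t)
    (Ω₀ : Set (Euc d)) (hΩ₀bdd : Bornology.IsBounded Ω₀) (hΩ₀open : IsOpen Ω₀)
    (D : ℝ) (hD : 0 < D)
    (u : ℝ → Euc d → ℝ)
    (huC1 : ContDiff ℝ 1 (fun p : ℝ × Euc d => u p.1 p.2))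
    (huC2 : ∀ t : ℝ, ContDiff ℝ 2 (u t))
    (hubdd : ∃ C : ℝ, ∀ (t : ℝ) (x : Euc d),
      |u t x| ≤ C ∧ ‖fderiv ℝ (fun q : ℝ × Euc d => u q.1 q.2) (t, x)‖ ≤ C ∧
        ‖fderiv ℝ (gradient (u t)) x‖ ≤ C)
    (f : ℝ → Euc d → ℝ)
    (hfcont : Continuous (fun p : ℝ × Euc d => f p.1 p.2))
    (hfbdd : ∃ C : ℝ, ∀ (t : ℝ) (x : Euc d), |f t x| ≤ C)
    (hPDE : ∀ t : ℝ, ∀ x ∈ Φ t '' Ω₀,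
      deriv (fun s => u s x) t + vdiv (fun y => u t y • β t y) x - D * lapl (u t) x
        = f t x)
    (hNeumann : ∀ t : ℝ, ∫ x in Φ t '' Ω₀, lapl (u t) x = 0) :
    ∀ t : ℝ,
      HasDerivAt (fun s => ∫ x in Φ s '' Ω₀, u s x)
        (∫ x in Φ t '' Ω₀, f t x) t := by
  intro t
  classical
  -- basic regularity facts
  have hud : Differentiable ℝ (fun p : ℝ × Euc d => u p.1 p.2) := huC1.differentiable one_ne_zero
  have hβd : Differentiable ℝ (fun p : ℝ × Euc d => β p.1 p.2) := hβ.differentiable one_ne_zero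
  have hucont : Continuous (fun p : ℝ × Euc d => u p.1 p.2) := huC1.continuous
  have hΦcont : Continuous (fun p : ℝ × Euc d => Φ p.1 p.2) := hΦC1.continuous
  have hβcont : Continuous (fun p : ℝ × Euc d => β p.1 p.2) := hβ.continuous
  set Fu := fderiv ℝ (fun p : ℝ × Euc d => u p.1 p.2) with hFu
  set Fβ := fderiv ℝ (fun p : ℝ × Euc d => β p.1 p.2) with hFβ
  have hFucont : Continuous Fu := huC1.continuous_fderiv one_ne_zero
  have hFβcont : Continuous Fβ := hβ.continuous_fderiv one_ne_zero
  -- the Jacobian determinant and the trace of Dβ along the flow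
  set δ : ℝ → Euc d → ℝ := fun s y => LinearMap.det (DΦ s y).toLinearMap with hδdef
  set trB : ℝ → Euc d → ℝ :=
    fun s y => LinearMap.trace ℝ (Euc d) (fderiv ℝ (β s) (Φ s y)).toLinearMap with htrBdef
  have hδderiv : ∀ s y, HasDerivAt (fun r => δ r y) (trB s y * δ s y) s :=
    fun s y => my_jacobi (hDΦt s y)
  -- partial space derivatives as compositions of the full derivative
  have hβpart : ∀ s x, HasFDerivAt (β s)
      ((Fβ (s, x)).comp (ContinuousLinearMap.inr ℝ ℝ (Euc d))) x := fun s x =>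
    (hβd (s, x)).hasFDerivAt.comp x (hasFDerivAt_prodMk_right s x)
  have hupart : ∀ s x, HasFDerivAt (u s)
      ((Fu (s, x)).comp (ContinuousLinearMap.inr ℝ ℝ (Euc d))) x := fun s x =>
    (hud (s, x)).hasFDerivAt.comp x (hasFDerivAt_prodMk_right s x)
  -- continuity of trB and δ in both variables jointly
  have htrBcont : Continuous fun p : ℝ × Euc d => trB p.1 p.2 := by
    have heq : (fun p : ℝ × Euc d => trB p.1 p.2) = fun p : ℝ × Euc d =>
        LinearMap.trace ℝ (Euc d)
          (((Fβ (p.1, Φ p.1 p.2)).comp (ContinuousLinearMap.inr ℝ ℝ (Euc d))).toLinearMap) := by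
      funext p
      show LinearMap.trace ℝ (Euc d) (fderiv ℝ (β p.1) (Φ p.1 p.2)).toLinearMap = _
      rw [(hβpart p.1 (Φ p.1 p.2)).fderiv]
    rw [heq]
    exact continuous_clmTrace.comp
      ((hFβcont.comp (continuous_fst.prodMk hΦcont)).clm_comp continuous_const)
  have hδcont : Continuous fun p : ℝ × Euc d => δ p.1 p.2 :=
    ContinuousLinearMap.continuous_det.comp hDΦcont
  -- positivity of the Jacobian
  have hδ0 : ∀ y, δ 0 y = 1 := by
    intro y
    have hid : HasFDerivAt (Φ 0) (ContinuousLinearMap.id ℝ (Euc d)) y := by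
      have hΦ0' : Φ 0 = id := funext hΦ0
      rw [hΦ0']
      exact hasFDerivAt_id y
    have hDid : DΦ 0 y = ContinuousLinearMap.id ℝ (Euc d) := (hDΦ 0 y).unique hid
    rw [hδdef]
    simp only [hDid]
    simp
  have hδpos : ∀ s y, 0 < δ s y := by
    intro s y
    exact my_ode_pos (c := fun r => trB r y)
      (htrBcont.comp (continuous_id.prodMk continuous_const))
      (fun r => hδderiv r y) (hδ0 y) s
  -- change of variables
  have hΩmeas : MeasurableSet Ω₀ := hΩ₀open.measurableSet
  have cov : ∀ (s : ℝ) (g : Euc d → ℝ),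
      ∫ x in Φ s '' Ω₀, g x = ∫ y in Ω₀, δ s y * g (Φ s y) := by
    intro s g
    rw [integral_image_eq_integral_abs_det_fderiv_smul volume hΩmeas
      (fun x _ => (hDΦ s x).hasFDerivWithinAt) (hΦinj s).injOn g]
    refine integral_congr_ae (Filter.Eventually.of_forall fun y => ?_)
    show |(DΦ s y).det| • g (Φ s y) = δ s y * g (Φ s y)
    have hdet : (DΦ s y).det = δ s y := rfl
    rw [smul_eq_mul, hdet, abs_of_pos (hδpos s y)]
  -- compactness and finite measure
  have hK : IsCompact (closure Ω₀) :=
    Metric.isCompact_of_isClosed_isBounded isClosed_closure hΩ₀bdd.closure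
  haveI hμfin : IsFiniteMeasure (volume.restrict Ω₀) :=
    ⟨by rw [Measure.restrict_apply_univ]; exact hΩ₀bdd.measure_lt_top⟩
  have hint : ∀ (g : Euc d → ℝ), Continuous g → IntegrableOn g Ω₀ := fun g hg =>
    (hg.continuousOn.integrableOn_compact hK).mono_set subset_closure
  -- the integrand after change of variables and its time derivative
  set F : ℝ → Euc d → ℝ := fun s y => δ s y * u s (Φ s y) with hFdef
  set F' : ℝ → Euc d → ℝ := fun s y =>
    trB s y * δ s y * u s (Φ s y) + δ s y * Fu (s, Φ s y) (1, β s (Φ s y)) with hF'def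
  have hpath : ∀ s y, HasDerivAt (fun r => u r (Φ r y))
      (Fu (s, Φ s y) (1, β s (Φ s y))) s := by
    intro s y
    have h1 : HasDerivAt (fun r => ((r : ℝ), Φ r y)) ((1 : ℝ), β s (Φ s y)) s :=
      (hasDerivAt_id s).prodMk (hΦt s y)
    simpa [Function.comp_def] using (hud (s, Φ s y)).hasFDerivAt.comp_hasDerivAt s h1
  have hFderiv : ∀ s y, HasDerivAt (fun r => F r y) (F' s y) s :=
    fun s y => (hδderiv s y).mul (hpath s y)
  -- joint continuity of F and F'
  have hFcont : Continuous fun p : ℝ × Euc d => F p.1 p.2 :=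
    hδcont.mul (hucont.comp (continuous_fst.prodMk hΦcont))
  have hF'cont : Continuous fun p : ℝ × Euc d => F' p.1 p.2 := by
    apply Continuous.add
    · exact (htrBcont.mul hδcont).mul (hucont.comp (continuous_fst.prodMk hΦcont))
    · exact hδcont.mul ((hFucont.comp (continuous_fst.prodMk hΦcont)).clm_apply
        (continuous_const.prodMk (hβcont.comp (continuous_fst.prodMk hΦcont))))
  -- uniform bound on F' near t
  obtain ⟨C, hC⟩ := ((isCompact_Icc (a := t - 1) (b := t + 1)).prod hK).exists_bound_of_continuousOn
    hF'cont.continuousOn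
  -- differentiate under the integral sign
  have main := hasDerivAt_integral_of_dominated_loc_of_deriv_le
    (μ := volume.restrict Ω₀) (F := fun s y => F s y) (F' := fun s y => F' s y)
    (x₀ := t) (bound := fun _ => C) (s := Metric.ball t 1) (Metric.ball_mem_nhds t one_pos)
    (Filter.Eventually.of_forall fun s =>
      ((hFcont.comp (continuous_const.prodMk continuous_id)).aestronglyMeasurable))
    (hint (F t) (hFcont.comp (continuous_const.prodMk continuous_id)))
    ((hF'cont.comp (continuous_const.prodMk continuous_id)).aestronglyMeasurable)
    ((ae_restrict_mem hΩmeas).mono (fun y hy s hs => by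
      have h1 : s ∈ Set.Icc (t - 1) (t + 1) := by
        rw [Metric.mem_ball, Real.dist_eq] at hs
        have := abs_lt.mp hs
        constructor <;> linarith [this.1, this.2]
      exact hC (s, y) ⟨h1, subset_closure hy⟩))
    (integrable_const C)
    (Filter.Eventually.of_forall fun y s _ => hFderiv s y)
  -- identify the function being differentiated
  have hfun : (fun s => ∫ y in Ω₀, F s y) = fun s => ∫ x in Φ s '' Ω₀, u s x := by
    funext s
    rw [cov s (u s)]
  -- identify the derivative value
  have key : ∀ y ∈ Ω₀, F' t y = δ t y * (f t (Φ t y) + D * lapl (u t) (Φ t y)) := by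
    intro y hy
    have hx : Φ t y ∈ Φ t '' Ω₀ := Set.mem_image_of_mem _ hy
    have hpde := hPDE t (Φ t y) hx
    have h1 : deriv (fun s => u s (Φ t y)) t = Fu (t, Φ t y) (1, 0) := by
      have h0 : HasDerivAt (fun s => ((s : ℝ), Φ t y)) ((1 : ℝ), (0 : Euc d)) t :=
        (hasDerivAt_id t).prodMk (hasDerivAt_const t (Φ t y))
      exact HasDerivAt.deriv
        (by simpa [Function.comp_def] using (hud (t, Φ t y)).hasFDerivAt.comp_hasDerivAt t h0)
    have h2 : vdiv (fun z => u t z • β t z) (Φ t y)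
        = Fu (t, Φ t y) (0, β t (Φ t y)) + u t (Φ t y) * trB t y := by
      rw [vdiv_smul (hupart t (Φ t y)).differentiableAt (hβpart t (Φ t y)).differentiableAt]
      rw [(hupart t (Φ t y)).fderiv]
      have : vdiv (β t) (Φ t y) = trB t y := rfl
      rw [this]
      simp
    have h3 : Fu (t, Φ t y) (1, β t (Φ t y))
        = Fu (t, Φ t y) (1, 0) + Fu (t, Φ t y) (0, β t (Φ t y)) := by
      rw [← ContinuousLinearMap.map_add]
      norm_num
    rw [h1, h2] at hpde
    show trB t y * δ t y * u t (Φ t y) + δ t y * Fu (t, Φ t y) (1, β t (Φ t y))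
      = δ t y * (f t (Φ t y) + D * lapl (u t) (Φ t y))
    rw [h3]
    linear_combination δ t y * hpde
  have hintδf : IntegrableOn (fun y => δ t y * f t (Φ t y)) Ω₀ :=
    hint _ ((hδcont.comp (continuous_const.prodMk continuous_id)).mul
      ((hfcont.comp (continuous_const.prodMk continuous_id)).comp
        (hΦcont.comp (continuous_const.prodMk continuous_id))))
  have hintδl : IntegrableOn (fun y => δ t y * lapl (u t) (Φ t y)) Ω₀ :=
    hint _ ((hδcont.comp (continuous_const.prodMk continuous_id)).mul
      ((lapl_continuous (huC2 t)).comp (hΦcont.comp (continuous_const.prodMk continuous_id))))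
  have hval : ∫ y in Ω₀, F' t y = ∫ x in Φ t '' Ω₀, f t x := by
    have hstep : ∫ y in Ω₀, F' t y
        = ∫ y in Ω₀, (δ t y * f t (Φ t y) + D * (δ t y * lapl (u t) (Φ t y))) := by
      refine setIntegral_congr_fun hΩmeas fun y hy => ?_
      rw [key y hy]
      ring
    rw [hstep, integral_add hintδf (hintδl.const_mul D)]
    rw [MeasureTheory.integral_const_mul]
    rw [← cov t (f t), ← cov t (lapl (u t)), hNeumann t]
    ring
  rw [hfun, hval] at main
  exact main.2
end
end

section
/- Local discrete mass conservation of the conservative space-time CutFEM scheme: suppose the discrete solution u_h satisfies the scheme equation A^n(u_h, v) + S^n(u_h, v) = L^n(v) for the constant test function v ≡ 1, whose elementwise representative on every mesh element is the constant polynomial 1. Since ∂ₜ1 = 0, ∇1 = 0, and all jumps of normal derivatives of orders i = 1, …, m of the constant function vanish on every face, it follows that ∫_{Ω(t_n)} u_h(t_n,x) dx − ∫_{Ω(t_{n−1})} u_h^-(x) dx = ∫_{t_{n−1}}^{t_n} ∫_{Ω(t)} f(t,x) dx dt. -/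
open MeasureTheory

noncomputable section

/-- First-order directional derivative in the (fixed) direction `n`. -/
noncomputable def dirDeriv {d : ℕ} (n : Euc d) (g : Euc d → ℝ) : Euc d → ℝ :=
  fun x => fderiv ℝ g x n

/-- `i`-th order directional derivative in the direction `n`. -/
noncomputable def dirDerivIter {d : ℕ} (n : Euc d) (i : ℕ) (g : Euc d → ℝ) : Euc d → ℝ :=
  (dirDeriv n)^[i] g

/-- Local discrete mass conservation of the conservative space-time CutFEM scheme:
testing the scheme `Aⁿ(u_h,v) + Sⁿ(u_h,v) = Lⁿ(v)` with the constant function `v ≡ 1`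
(whose elementwise representative on every element is the constant polynomial 1) yields
`∫_{Ω(tₙ)} u_h − ∫_{Ω(tₙ₋₁)} u_h⁻ = ∫_{Iₙ} ∫_{Ω(t)} f`. -/
theorem cutfem_local_mass_conservation
    (d : ℕ) (hd : 1 ≤ d)
    (tnm1 tn : ℝ) (htn : tnm1 < tn)
    -- evolving family of bounded measurable domains
    (Ω : ℝ → Set (Euc d))
    (hΩ : ∀ t ∈ Set.Icc tnm1 tn, Bornology.IsBounded (Ω t) ∧ MeasurableSet (Ω t))
    -- bounded continuous velocity field
    (β : ℝ → Euc d → Euc d)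
    (hβcont : Continuous fun p : ℝ × Euc d => β p.1 p.2)
    (hβbdd : ∃ C : ℝ, ∀ (t : ℝ) (x : Euc d), ‖β t x‖ ≤ C)
    (D : ℝ) (hD : 0 < D)
    -- source term, integrable over the space-time region
    (f : ℝ → Euc d → ℝ)
    (hf : IntegrableOn (fun p : ℝ × Euc d => f p.1 p.2)
      {p : ℝ × Euc d | p.1 ∈ Set.Icc tnm1 tn ∧ p.2 ∈ Ω p.1})
    -- data from the previous slab
    (uhm : Euc d → ℝ) (huhm : IntegrableOn uhm (Ω tnm1))
    -- discrete solution, C¹ on each space-time element, integrable at tₙ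
    (uh : ℝ → Euc d → ℝ)
    (𝓚 : Finset (Set (ℝ × Euc d)))
    (huhC1 : ∀ K ∈ 𝓚, ContDiffOn ℝ 1 (fun p : ℝ × Euc d => uh p.1 p.2) K)
    (huhint : IntegrableOn (uh tn) (Ω tn))
    -- faces, normals, face measures, stabilization parameters
    (ι : Type) (𝓕 : Finset ι) (nF : ι → Euc d) (hnF : ∀ F, ‖nF F‖ = 1)
    (σF : ι → Measure (Euc d))
    (m : ℕ) (τ : ι → ℕ → ℝ) (hτ : ∀ F i, 0 < τ F i) (h : ℝ) (hh : 0 < h)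
    -- the two smooth elementwise representatives of u_h on the elements sharing each face
    (uhRep : ι → Fin 2 → ℝ → Euc d → ℝ)
    -- the constant test function v ≡ 1, with elementwise representatives ≡ 1
    (v : ℝ → Euc d → ℝ) (hv : ∀ (t : ℝ) (x : Euc d), v t x = 1)
    (vRep : ι → Fin 2 → ℝ → Euc d → ℝ)
    (hvRep : ∀ (F : ι) (j : Fin 2) (t : ℝ) (x : Euc d), vRep F j t x = 1)
    -- the scheme equation Aⁿ(u_h, v) + Sⁿ(u_h, v) = Lⁿ(v) for this v
    (hscheme :
      ((∫ x in Ω tn, uh tn x * v tn x)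
        - (∫ t in tnm1..tn, ∫ x in Ω t, uh t x * deriv (fun s => v s x) t)
        - (∫ t in tnm1..tn, ∫ x in Ω t,
            uh t x * (inner ℝ (β t x) (gradient (v t) x) : ℝ))
        + (∫ t in tnm1..tn, ∫ x in Ω t,
            D * (inner ℝ (gradient (uh t) x) (gradient (v t) x) : ℝ)))
      + (∫ t in tnm1..tn, ∑ F ∈ 𝓕, ∑ i ∈ Finset.Icc 1 m,
          τ F i * h ^ (2 * i - 1) *
            ∫ x, (dirDerivIter (nF F) i (uhRep F 0 t) x
                    - dirDerivIter (nF F) i (uhRep F 1 t) x)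
                * (dirDerivIter (nF F) i (vRep F 0 t) x
                    - dirDerivIter (nF F) i (vRep F 1 t) x) ∂(σF F))
      = (∫ x in Ω tnm1, uhm x * v tnm1 x)
        + ∫ t in tnm1..tn, ∫ x in Ω t, f t x * v t x) :
    (∫ x in Ω tn, uh tn x) - (∫ x in Ω tnm1, uhm x)
      = ∫ t in tnm1..tn, ∫ x in Ω t, f t x := by
  have hvRepfun : ∀ F j t, vRep F j t = fun _ : Euc d => (1:ℝ) :=
    fun F j t => funext (hvRep F j t)
  have hgrad : ∀ (t : ℝ) (x : Euc d), gradient (v t) x = 0 := by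
    intro t x
    have : v t = fun _ : Euc d => (1:ℝ) := funext (hv t)
    rw [this]
    simp [gradient]
  simp only [hv, hvRepfun, hgrad, mul_one, inner_zero_right, mul_zero, deriv_const',
    sub_self, zero_mul, integral_zero, Finset.sum_const_zero,
    intervalIntegral.integral_zero, sub_zero, add_zero, integral_const] at hscheme
  linarith
end
end

section
/- Discrete mass conservation is preserved under quadrature in time: suppose the discrete solution u_h satisfies the quadrature scheme equation A_h^n(u_h, v) + S_h^n(u_h, v) = L_h^n(v) for the constant test function v ≡ 1, whose elementwise representative on every mesh element is the constant polynomial 1. As ∂ₜ1 = 0, ∇1 = 0, and all jumps of normal derivatives of the constant function vanish, it follows that ∫_{Ω(t_n)} u_h(t_n,x) dx − ∫_{Ω(t_{n−1})} u_h^-(x) dx = Σ_{q=1}^{N_t} ω_q ∫_{Ω(t_q)} f(t_q,x) dx. -/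
open MeasureTheory

noncomputable section

lemma dirDeriv_const' {d : ℕ} (n : Euc d) (c : ℝ) :
    dirDeriv n (fun _ => c) = fun _ => 0 := by
  funext x; simp [dirDeriv]

lemma dirDerivIter_const_one {d : ℕ} (n : Euc d) (i : ℕ) (hi : 1 ≤ i) :
    dirDerivIter n i (fun _ => (1 : ℝ)) = fun _ => 0 := by
  obtain ⟨j, rfl⟩ := Nat.exists_eq_add_of_le hi
  unfold dirDerivIter
  rw [add_comm, Function.iterate_add_apply, Function.iterate_one, dirDeriv_const' n 1]
  induction j with
  | zero => simp
  | succ k ih => rw [Function.iterate_succ_apply, dirDeriv_const' n 0, ih (by omega)]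

/-- Discrete mass conservation is preserved under quadrature in time:
testing the quadrature scheme `A_hⁿ(u_h,v) + S_hⁿ(u_h,v) = L_hⁿ(v)` with the constant
function `v ≡ 1` yields
`∫_{Ω(tₙ)} u_h − ∫_{Ω(tₙ₋₁)} u_h⁻ = Σ_q ω_q ∫_{Ω(t_q)} f(t_q,·)`. -/
theorem cutfem_quadrature_mass_conservation
    (d : ℕ) (hd : 1 ≤ d)
    (tnm1 tn : ℝ) (htn : tnm1 < tn)
    -- quadrature points in Iₙ with weights
    (Nt : ℕ) (tq : Fin Nt → ℝ) (htq : ∀ q, tq q ∈ Set.Icc tnm1 tn) (ω : Fin Nt → ℝ)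
    -- evolving family of bounded measurable domains
    (Ω : ℝ → Set (Euc d))
    (hΩ : ∀ t ∈ Set.Icc tnm1 tn, Bornology.IsBounded (Ω t) ∧ MeasurableSet (Ω t))
    -- bounded continuous velocity field
    (β : ℝ → Euc d → Euc d)
    (hβcont : Continuous fun p : ℝ × Euc d => β p.1 p.2)
    (hβbdd : ∃ C : ℝ, ∀ (t : ℝ) (x : Euc d), ‖β t x‖ ≤ C)
    (D : ℝ) (hD : 0 < D)
    -- source term, integrable on Ω(t_q) for each quadrature point
    (f : ℝ → Euc d → ℝ)
    (hf : ∀ q, IntegrableOn (f (tq q)) (Ω (tq q)))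
    -- data from the previous slab
    (uhm : Euc d → ℝ) (huhm : IntegrableOn uhm (Ω tnm1))
    -- discrete solution, C¹ on each space-time element, integrable at tₙ
    (uh : ℝ → Euc d → ℝ)
    (𝓚 : Finset (Set (ℝ × Euc d)))
    (huhC1 : ∀ K ∈ 𝓚, ContDiffOn ℝ 1 (fun p : ℝ × Euc d => uh p.1 p.2) K)
    (huhint : IntegrableOn (uh tn) (Ω tn))
    -- faces, normals, face measures, stabilization parameters
    (ι : Type) (𝓕 : Finset ι) (nF : ι → Euc d) (hnF : ∀ F, ‖nF F‖ = 1)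
    (σF : ι → Measure (Euc d))
    (m : ℕ) (τ : ι → ℕ → ℝ) (hτ : ∀ F i, 0 < τ F i) (h : ℝ) (hh : 0 < h)
    -- the two smooth elementwise representatives of u_h on the elements sharing each face
    (uhRep : ι → Fin 2 → ℝ → Euc d → ℝ)
    -- the constant test function v ≡ 1, with elementwise representatives ≡ 1
    (v : ℝ → Euc d → ℝ) (hv : ∀ (t : ℝ) (x : Euc d), v t x = 1)
    (vRep : ι → Fin 2 → ℝ → Euc d → ℝ)
    (hvRep : ∀ (F : ι) (j : Fin 2) (t : ℝ) (x : Euc d), vRep F j t x = 1)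
    -- the quadrature scheme equation A_hⁿ(u_h, v) + S_hⁿ(u_h, v) = L_hⁿ(v) for this v
    (hscheme :
      ((∫ x in Ω tn, uh tn x * v tn x)
        - (∑ q, ω q * ∫ x in Ω (tq q), uh (tq q) x * deriv (fun s => v s x) (tq q))
        - (∑ q, ω q * ∫ x in Ω (tq q),
            uh (tq q) x * (inner ℝ (β (tq q) x) (gradient (v (tq q)) x) : ℝ))
        + (∑ q, ω q * ∫ x in Ω (tq q),
            D * (inner ℝ (gradient (uh (tq q)) x) (gradient (v (tq q)) x) : ℝ)))
      + (∑ q, ω q * ∑ F ∈ 𝓕, ∑ i ∈ Finset.Icc 1 m,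
          τ F i * h ^ (2 * i - 1) *
            ∫ x, (dirDerivIter (nF F) i (uhRep F 0 (tq q)) x
                    - dirDerivIter (nF F) i (uhRep F 1 (tq q)) x)
                * (dirDerivIter (nF F) i (vRep F 0 (tq q)) x
                    - dirDerivIter (nF F) i (vRep F 1 (tq q)) x) ∂(σF F))
      = (∫ x in Ω tnm1, uhm x * v tnm1 x)
        + ∑ q, ω q * ∫ x in Ω (tq q), f (tq q) x * v (tq q) x) :
    (∫ x in Ω tn, uh tn x) - (∫ x in Ω tnm1, uhm x)
      = ∑ q, ω q * ∫ x in Ω (tq q), f (tq q) x := by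
  have hv' : v = fun _ _ => (1 : ℝ) := funext fun t => funext (hv t)
  have hvRep' : vRep = fun _ _ _ _ => (1 : ℝ) :=
    funext fun F => funext fun j => funext fun t => funext (hvRep F j t)
  subst hv' hvRep'
  have hstab : ∀ (F : ι) (i : ℕ), i ∈ Finset.Icc 1 m → ∀ x : Euc d, ∀ q : Fin Nt,
      (dirDerivIter (nF F) i (fun _ => (1:ℝ)) x - dirDerivIter (nF F) i (fun _ => (1:ℝ)) x) = 0 := by
    intros; simp
  simp only [deriv_const, mul_zero, integral_zero, mul_one, sub_self, zero_mul,
    Finset.sum_const_zero, add_zero, sub_zero, gradient_fun_const, inner_zero_right,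
    inner_zero_left] at hscheme
  linarith
end
end
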